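/- arXiv:2305.03426 — 7 statements merged into one kernel-verified Lean document; each statement's English description precedes it below -/
import Mathlib

section
/- (Convergence of coding sequences, proof of Theorem 3) Let r ∈ [0,1) and M ≥ 0. Let (T_k)_{k∈ℕ} be a sequence of isometries of ℝ^d fixing the origin, and let (g_k)_{k∈ℕ} be a sequence of maps ℝ^d → ℝ^d, each Lipschitz with constant r and satisfying ‖g_k(0)‖ ≤ M for all k. Then the sequence x_k = (T₀ ∘ g₀) ∘ (T₁ ∘ g₁) ∘ ⋯ ∘ (T_k ∘ g_k)(0) is convergent in ℝ^d. -/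
/-- `compSeq k F = F 0 ∘ F 1 ∘ ⋯ ∘ F k`. -/
def compSeq {X : Type*} : ℕ → (ℕ → X → X) → X → X
  | 0, F => F 0
  | (k + 1), F => F 0 ∘ compSeq k (fun i => F (i + 1))

lemma compSeq_diff_bound {d : ℕ} (r M : ℝ) (hr0 : 0 ≤ r) :
    ∀ (k : ℕ) (F : ℕ → EuclideanSpace ℝ (Fin d) → EuclideanSpace ℝ (Fin d)),
      (∀ i x y, ‖F i x - F i y‖ ≤ r * ‖x - y‖) → (∀ i, ‖F i 0‖ ≤ M) →
      ‖compSeq (k + 1) F 0 - compSeq k F 0‖ ≤ r ^ (k + 1) * M := by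
  intro k
  induction k with
  | zero =>
    intro F hF hF0
    calc ‖compSeq 1 F 0 - compSeq 0 F 0‖ = ‖F 0 (F 1 0) - F 0 0‖ := rfl
      _ ≤ r * ‖F 1 0 - 0‖ := hF 0 _ _
      _ = r * ‖F 1 0‖ := by rw [sub_zero]
      _ ≤ r * M := mul_le_mul_of_nonneg_left (hF0 1) hr0
      _ = r ^ 1 * M := by ring
  | succ k ih =>
    intro F hF hF0
    have hIH := ih (fun i => F (i + 1)) (fun i => hF (i + 1)) (fun i => hF0 (i + 1))
    calc ‖compSeq (k + 2) F 0 - compSeq (k + 1) F 0‖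
        = ‖F 0 (compSeq (k + 1) (fun i => F (i + 1)) 0) -
            F 0 (compSeq k (fun i => F (i + 1)) 0)‖ := rfl
      _ ≤ r * ‖compSeq (k + 1) (fun i => F (i + 1)) 0 -
            compSeq k (fun i => F (i + 1)) 0‖ := hF 0 _ _
      _ ≤ r * (r ^ (k + 1) * M) := mul_le_mul_of_nonneg_left hIH hr0
      _ = r ^ (k + 2) * M := by ring

/-- Convergence of coding sequences (proof of Theorem 3): if each `T_k` is an isometry of
`ℝ^d` fixing the origin and each `g_k` is `r`-Lipschitz (`r ∈ [0,1)`) with `‖g_k 0‖ ≤ M`,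
then the sequence `x_k = (T₀ ∘ g₀) ∘ (T₁ ∘ g₁) ∘ ⋯ ∘ (T_k ∘ g_k) (0)` converges. -/
theorem coding_sequence_converges {d : ℕ} (r M : ℝ) (hr0 : 0 ≤ r) (hr1 : r < 1) (hM : 0 ≤ M)
    (T g : ℕ → EuclideanSpace ℝ (Fin d) → EuclideanSpace ℝ (Fin d))
    (hT : ∀ i, ∀ x y, ‖T i x - T i y‖ = ‖x - y‖)
    (hT0 : ∀ i, T i 0 = 0)
    (hg : ∀ i, ∀ x y, ‖g i x - g i y‖ ≤ r * ‖x - y‖)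
    (hg0 : ∀ i, ‖g i 0‖ ≤ M) :
    ∃ L : EuclideanSpace ℝ (Fin d),
      Filter.Tendsto (fun k => compSeq k (fun i => T i ∘ g i) 0) Filter.atTop (nhds L) := by
  set F : ℕ → EuclideanSpace ℝ (Fin d) → EuclideanSpace ℝ (Fin d) := fun i => T i ∘ g i with hFdef
  have hFlip : ∀ i x y, ‖F i x - F i y‖ ≤ r * ‖x - y‖ := by
    intro i x y
    calc ‖T i (g i x) - T i (g i y)‖ = ‖g i x - g i y‖ := hT i _ _
      _ ≤ r * ‖x - y‖ := hg i x y
  have hF0 : ∀ i, ‖F i 0‖ ≤ M := by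
    intro i
    calc ‖T i (g i 0)‖ = ‖T i (g i 0) - T i 0‖ := by rw [hT0 i, sub_zero]
      _ = ‖g i 0 - 0‖ := hT i _ _
      _ = ‖g i 0‖ := by rw [sub_zero]
      _ ≤ M := hg0 i
  have hbound := compSeq_diff_bound (d := d) r M hr0
  have hcauchy : CauchySeq (fun k => compSeq k F 0) := by
    apply cauchySeq_of_le_geometric r (r * M) hr1
    intro n
    rw [dist_eq_norm]
    have := hbound n F hFlip hF0
    calc ‖compSeq n F 0 - compSeq (n + 1) F 0‖
        = ‖compSeq (n + 1) F 0 - compSeq n F 0‖ := norm_sub_rev _ _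
      _ ≤ r ^ (n + 1) * M := this
      _ = r * M * r ^ n := by ring
  exact cauchySeq_tendsto_of_complete hcauchy
end

section
/- (Theorem 3, existence of the minimal invariant set) Let R₁,…,Rₘ : ℝ^d → ℝ^d (m ≥ 1) be surjective isometries fixing the origin and let f₁,…,fₙ : ℝ^d → ℝ^d (n ≥ 1) be Banach contractions. Then there exists a nonempty compact set X₀ ⊆ ℝ^d such that X₀ = (⋃ᵢ Rᵢ(X₀)) ∪ (⋃ⱼ fⱼ(X₀)), and X₀ ⊆ X for every nonempty closed bounded set X ⊆ ℝ^d satisfying X = (⋃ᵢ Rᵢ(X)) ∪ (⋃ⱼ fⱼ(X)). -/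
/-- Theorem 3: every R-IFS (surjective isometries fixing the origin together with Banach
contractions) possesses a minimal invariant set: a nonempty compact invariant set contained
in every nonempty closed bounded invariant set. -/
theorem exists_minimal_invariant_set_of_RIFS {d m n : ℕ} (hm : 0 < m) (hn : 0 < n)
    (R : Fin m → EuclideanSpace ℝ (Fin d) → EuclideanSpace ℝ (Fin d))
    (hRiso : ∀ i, Isometry (R i))
    (hRsurj : ∀ i, Function.Surjective (R i))
    (hR0 : ∀ i, R i 0 = 0)
    (f : Fin n → EuclideanSpace ℝ (Fin d) → EuclideanSpace ℝ (Fin d))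
    (r : Fin n → ℝ) (hr0 : ∀ j, 0 ≤ r j) (hr1 : ∀ j, r j < 1)
    (hf : ∀ j x y, ‖f j x - f j y‖ ≤ r j * ‖x - y‖) :
    ∃ X₀ : Set (EuclideanSpace ℝ (Fin d)), X₀.Nonempty ∧ IsCompact X₀ ∧
      X₀ = (⋃ i, R i '' X₀) ∪ (⋃ j, f j '' X₀) ∧
      ∀ X : Set (EuclideanSpace ℝ (Fin d)), X.Nonempty → IsClosed X →
        Bornology.IsBounded X → X = (⋃ i, R i '' X) ∪ (⋃ j, f j '' X) → X₀ ⊆ X := by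
  classical
  have j0 : Fin n := ⟨0, hn⟩
  -- Lipschitz facts
  have hlip : ∀ j : Fin n, LipschitzWith ⟨r j, hr0 j⟩ (f j) := fun j =>
    LipschitzWith.of_dist_le_mul fun x y => by
      show dist (f j x) (f j y) ≤ r j * dist x y
      simpa [dist_eq_norm] using hf j x y
  have hcontr : ContractingWith ⟨r j0, hr0 j0⟩ (f j0) :=
    ⟨by exact_mod_cast hr1 j0, hlip j0⟩
  set p : EuclideanSpace ℝ (Fin d) := ContractingWith.fixedPoint (f j0) hcontr with hp
  have hpfix : f j0 p = p := hcontr.fixedPoint_isFixedPt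
  -- the Hutchinson operator
  set F : Set (EuclideanSpace ℝ (Fin d)) → Set (EuclideanSpace ℝ (Fin d)) := fun S => (⋃ i, R i '' S) ∪ (⋃ j, f j '' S) with hF
  have hmono : Monotone F := by
    intro A B hAB
    apply Set.union_subset_union <;>
      exact Set.iUnion_mono fun _ => Set.image_mono hAB
  -- iterates
  set S : ℕ → Set (EuclideanSpace ℝ (Fin d)) := fun k => F^[k] {p} with hS
  have hSsucc : ∀ k, S (k + 1) = F (S k) := fun k => Function.iterate_succ_apply' F k {p}
  have hstep : S 0 ⊆ S 1 := by
    intro x hx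
    rcases hx with rfl
    rw [hSsucc]
    exact Or.inr (Set.mem_iUnion.mpr ⟨j0, p, rfl, hpfix⟩)
  have hchain : ∀ k, S k ⊆ S (k + 1) := by
    intro k
    induction k with
    | zero => exact hstep
    | succ k ih => rw [hSsucc, hSsucc]; exact hmono ih
  set U : Set (EuclideanSpace ℝ (Fin d)) := ⋃ k, S k with hU
  set X₀ : Set (EuclideanSpace ℝ (Fin d)) := closure U with hX₀
  -- the bounding radius
  set ρ : ℝ := ∑ j : Fin n, ‖f j 0‖ / (1 - r j) with hρ
  have hterm : ∀ j : Fin n, 0 ≤ ‖f j 0‖ / (1 - r j) := fun j =>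
    div_nonneg (norm_nonneg _) (by linarith [hr1 j])
  have hρj : ∀ j : Fin n, ‖f j 0‖ / (1 - r j) ≤ ρ := fun j =>
    Finset.single_le_sum (fun j _ => hterm j) (Finset.mem_univ j)
  set B : Set (EuclideanSpace ℝ (Fin d)) := Metric.closedBall 0 ρ with hB
  have hRnorm : ∀ i (x : EuclideanSpace ℝ (Fin d)), ‖R i x‖ = ‖x‖ := by
    intro i x
    have := (hRiso i).dist_eq x 0
    rwa [hR0 i, dist_zero_right, dist_zero_right] at this
  have hfB : ∀ j : Fin n, ∀ x ∈ B, f j x ∈ B := by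
    intro j x hx
    rw [hB, Metric.mem_closedBall, dist_zero_right] at *
    have h1 : ‖f j x - f j 0‖ ≤ r j * ‖x‖ := by simpa using hf j x 0
    have h2 : ‖f j x‖ ≤ ‖f j x - f j 0‖ + ‖f j 0‖ := by
      have := norm_add_le (f j x - f j 0) (f j 0)
      simpa using this
    have h3 : ‖f j 0‖ ≤ (1 - r j) * ρ := by
      have := hρj j
      have hpos : 0 < 1 - r j := by linarith [hr1 j]
      calc ‖f j 0‖ = (1 - r j) * (‖f j 0‖ / (1 - r j)) := by field_simp
        _ ≤ (1 - r j) * ρ := by nlinarith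
    have hrρ : r j * ‖x‖ ≤ r j * ρ := mul_le_mul_of_nonneg_left hx (hr0 j)
    nlinarith
  have hFB : F B ⊆ B := by
    intro x hx
    rcases hx with hx | hx
    · rcases Set.mem_iUnion.mp hx with ⟨i, y, hy, rfl⟩
      rw [hB, Metric.mem_closedBall, dist_zero_right, hRnorm]
      rw [hB, Metric.mem_closedBall, dist_zero_right] at hy
      exact hy
    · rcases Set.mem_iUnion.mp hx with ⟨j, y, hy, rfl⟩
      exact hfB j y hy
  have hpB : p ∈ B := by
    rw [hB, Metric.mem_closedBall, dist_zero_right]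
    have h1 : ‖p - f j0 0‖ ≤ r j0 * ‖p‖ := by
      have := hf j0 p 0
      rwa [hpfix, sub_zero] at this
    have h2 : ‖p‖ ≤ ‖p - f j0 0‖ + ‖f j0 0‖ := by
      have := norm_add_le (p - f j0 0) (f j0 0)
      simpa using this
    have hpos : 0 < 1 - r j0 := by linarith [hr1 j0]
    have h3 : ‖p‖ ≤ ‖f j0 0‖ / (1 - r j0) := by
      rw [le_div_iff₀ hpos]; nlinarith
    exact h3.trans (hρj j0)
  have hSB : ∀ k, S k ⊆ B := by
    intro k
    induction k with
    | zero => intro x hx; rcases hx with rfl; exact hpB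
    | succ k ih => rw [hSsucc]; exact (hmono ih).trans hFB
  have hUB : U ⊆ B := Set.iUnion_subset hSB
  -- F U = U
  have hFUsub : F U ⊆ U := by
    intro x hx
    rcases hx with hx | hx
    · rcases Set.mem_iUnion.mp hx with ⟨i, y, hy, rfl⟩
      rcases Set.mem_iUnion.mp hy with ⟨k, hk⟩
      refine Set.mem_iUnion.mpr ⟨k + 1, ?_⟩
      rw [hSsucc]
      exact Or.inl (Set.mem_iUnion.mpr ⟨i, y, hk, rfl⟩)
    · rcases Set.mem_iUnion.mp hx with ⟨j, y, hy, rfl⟩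
      rcases Set.mem_iUnion.mp hy with ⟨k, hk⟩
      refine Set.mem_iUnion.mpr ⟨k + 1, ?_⟩
      rw [hSsucc]
      exact Or.inr (Set.mem_iUnion.mpr ⟨j, y, hk, rfl⟩)
  have hUsubF : U ⊆ F U := by
    intro x hx
    rcases Set.mem_iUnion.mp hx with ⟨k, hk⟩
    have : x ∈ F (S k) := by rw [← hSsucc]; exact hchain k hk
    exact hmono (Set.subset_iUnion S k) this
  -- continuity
  have hRc : ∀ i, Continuous (R i) := fun i => (hRiso i).continuous
  have hfc : ∀ j, Continuous (f j) := fun j => (hlip j).continuous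
  -- X₀ compact and nonempty
  have hX₀closed : IsClosed X₀ := isClosed_closure
  have hX₀bdd : Bornology.IsBounded X₀ := by
    have : Bornology.IsBounded U := Metric.isBounded_closedBall.subset hUB
    exact this.closure
  have hX₀cpt : IsCompact X₀ := Metric.isCompact_of_isClosed_isBounded hX₀closed hX₀bdd
  have hpU : p ∈ U := Set.mem_iUnion.mpr ⟨0, rfl⟩
  have hX₀ne : X₀.Nonempty := ⟨p, subset_closure hpU⟩
  -- invariance of X₀
  have hFX₀closed : IsClosed (F X₀) := by
    apply IsClosed.union
    · exact isClosed_iUnion_of_finite fun i => ((hX₀cpt.image (hRc i)).isClosed)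
    · exact isClosed_iUnion_of_finite fun j => ((hX₀cpt.image (hfc j)).isClosed)
  have hFX₀sub : F X₀ ⊆ X₀ := by
    intro x hx
    rcases hx with hx | hx
    · rcases Set.mem_iUnion.mp hx with ⟨i, y, hy, rfl⟩
      have := image_closure_subset_closure_image (hRc i) (Set.mem_image_of_mem _ hy)
      refine closure_mono ?_ this
      intro z hz
      rcases hz with ⟨w, hw, rfl⟩
      exact hFUsub (Or.inl (Set.mem_iUnion.mpr ⟨i, w, hw, rfl⟩))
    · rcases Set.mem_iUnion.mp hx with ⟨j, y, hy, rfl⟩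
      have := image_closure_subset_closure_image (hfc j) (Set.mem_image_of_mem _ hy)
      refine closure_mono ?_ this
      intro z hz
      rcases hz with ⟨w, hw, rfl⟩
      exact hFUsub (Or.inr (Set.mem_iUnion.mpr ⟨j, w, hw, rfl⟩))
  have hX₀subF : X₀ ⊆ F X₀ := by
    apply closure_minimal _ hFX₀closed
    exact hUsubF.trans (hmono subset_closure)
  have hinv : X₀ = F X₀ := le_antisymm hX₀subF hFX₀sub
  refine ⟨X₀, hX₀ne, hX₀cpt, hinv, ?_⟩
  -- minimality
  intro X hXne hXcl hXbdd hXinv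
  have hFXX : F X ⊆ X := le_of_eq hXinv.symm
  have hfX : ∀ x ∈ X, f j0 x ∈ X := fun x hx =>
    hFXX (Or.inr (Set.mem_iUnion.mpr ⟨j0, x, hx, rfl⟩))
  -- p ∈ X
  obtain ⟨x, hx⟩ := hXne
  have hiter : ∀ k, (f j0)^[k] x ∈ X := by
    intro k
    induction k with
    | zero => exact hx
    | succ k ih => rw [Function.iterate_succ_apply']; exact hfX _ ih
  have htend := hcontr.tendsto_iterate_fixedPoint x
  have hpX : p ∈ X := hXcl.mem_of_tendsto htend (Filter.Eventually.of_forall hiter)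
  have hSX : ∀ k, S k ⊆ X := by
    intro k
    induction k with
    | zero => intro y hy; rcases hy with rfl; exact hpX
    | succ k ih => rw [hSsucc]; exact (hmono ih).trans hFXX
  exact closure_minimal (Set.iUnion_subset hSX) hXcl
end

section
/- (Theorem 4) Let R₁,…,Rₘ : ℝ^d → ℝ^d (m ≥ 1) be surjective isometries fixing the origin and let f₁,…,fₙ : ℝ^d → ℝ^d (n ≥ 1) be Banach contractions. Let G be the group generated by R₁,…,Rₘ inside the group of bijections of ℝ^d under composition, and assume G is finite. Then the minimal invariant set X₀ of the R-IFS {R₁,…,Rₘ, f₁,…,fₙ} satisfies X₀ = ⋃_{g ∈ G} ⋃_{j=1}^{n} g(fⱼ(X₀)); moreover, X₀ is the unique nonempty compact set A ⊆ ℝ^d with A = ⋃_{g ∈ G} ⋃_{j=1}^{n} g(fⱼ(A)). -/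
/-- In a group, if the subgroup closure of `S` is finite (as a set), then every element of the
subgroup closure already lies in the submonoid closure of `S`. -/
theorem mem_submonoid_closure_of_finite {Γ : Type*} [Group Γ] {S : Set Γ}
    (hfin : ((Subgroup.closure S : Subgroup Γ) : Set Γ).Finite) :
    ∀ g ∈ Subgroup.closure S, g ∈ Submonoid.closure S := by
  have hMG : ∀ g ∈ Submonoid.closure S, g ∈ Subgroup.closure S := fun g hg =>
    Submonoid.closure_le.mpr (Subgroup.subset_closure (k := S)) hg
  have hord : ∀ g ∈ Subgroup.closure S, IsOfFinOrder g := by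
    intro g hg
    have : Finite (Subgroup.closure S : Subgroup Γ) := hfin.to_subtype
    have h1 : IsOfFinOrder (⟨g, hg⟩ : Subgroup.closure S) := isOfFinOrder_of_finite _
    obtain ⟨k, hk, hk1⟩ := isOfFinOrder_iff_pow_eq_one.mp h1
    refine isOfFinOrder_iff_pow_eq_one.mpr ⟨k, hk, ?_⟩
    have := congrArg (Subtype.val) hk1
    simpa using this
  have hinv : ∀ g ∈ Submonoid.closure S, g⁻¹ ∈ Submonoid.closure S := by
    intro g hg
    obtain ⟨k, hk, hk1⟩ := isOfFinOrder_iff_pow_eq_one.mp (hord g (hMG g hg))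
    have : g⁻¹ = g ^ (k - 1) := by
      refine inv_eq_of_mul_eq_one_right ?_
      rw [← pow_succ']
      rwa [Nat.sub_add_cancel hk]
    rw [this]
    exact pow_mem hg _
  intro g hg
  induction hg using Subgroup.closure_induction with
  | mem x hx => exact Submonoid.subset_closure hx
  | one => exact one_mem _
  | mul x y hx hy ihx ihy => exact mul_mem ihx ihy
  | inv x hx ih => exact hinv x ih

/-- Theorem 4: if the group `G` generated by the isometries `R₁,…,Rₘ` (inside the group of
bijections of `ℝ^d`) is finite, then the minimal invariant set `X₀` of the R-IFS
`{R₁,…,Rₘ, f₁,…,fₙ}` satisfies `X₀ = ⋃_{g ∈ G} ⋃_j g (fⱼ (X₀))` and is the unique nonempty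
compact set with this property, i.e. it is the attractor of the IFS `{g ∘ fⱼ}`. -/
theorem minimal_invariant_set_is_attractor_of_finite_group {d m n : ℕ} (hm : 0 < m) (hn : 0 < n)
    (R : Fin m → EuclideanSpace ℝ (Fin d) → EuclideanSpace ℝ (Fin d))
    (hRiso : ∀ i, Isometry (R i))
    (hRsurj : ∀ i, Function.Surjective (R i))
    (hR0 : ∀ i, R i 0 = 0)
    (f : Fin n → EuclideanSpace ℝ (Fin d) → EuclideanSpace ℝ (Fin d))
    (r : Fin n → ℝ) (hr0 : ∀ j, 0 ≤ r j) (hr1 : ∀ j, r j < 1)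
    (hf : ∀ j x y, ‖f j x - f j y‖ ≤ r j * ‖x - y‖)
    -- the isometries as bijections of ℝ^d
    (e : Fin m → Equiv.Perm (EuclideanSpace ℝ (Fin d)))
    (he : ∀ i, ⇑(e i) = R i)
    -- the generated group G is finite
    (G : Subgroup (Equiv.Perm (EuclideanSpace ℝ (Fin d))))
    (hG : G = Subgroup.closure (Set.range e))
    (hGfin : (G : Set (Equiv.Perm (EuclideanSpace ℝ (Fin d)))).Finite)
    -- X₀ is the minimal invariant set of the R-IFS
    (X₀ : Set (EuclideanSpace ℝ (Fin d)))
    (h0ne : X₀.Nonempty) (h0c : IsCompact X₀)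
    (h0inv : X₀ = (⋃ i, R i '' X₀) ∪ (⋃ j, f j '' X₀))
    (h0min : ∀ X : Set (EuclideanSpace ℝ (Fin d)), X.Nonempty → IsClosed X →
      Bornology.IsBounded X → X = (⋃ i, R i '' X) ∪ (⋃ j, f j '' X) → X₀ ⊆ X) :
    X₀ = (⋃ g ∈ (G : Set (Equiv.Perm (EuclideanSpace ℝ (Fin d)))), ⋃ j, g '' (f j '' X₀)) ∧
    ∀ A : Set (EuclideanSpace ℝ (Fin d)), A.Nonempty → IsCompact A →
      A = (⋃ g ∈ (G : Set (Equiv.Perm (EuclideanSpace ℝ (Fin d)))), ⋃ j, g '' (f j '' A)) →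
      A = X₀ := by
  -- basic index facts
  have j₀ : Fin n := ⟨0, hn⟩
  -- generators lie in G
  have heG : ∀ i, e i ∈ G := fun i => by
    rw [hG]; exact Subgroup.subset_closure ⟨i, rfl⟩
  -- every element of G is in the monoid closure
  have hGM : ∀ g ∈ G, g ∈ Submonoid.closure (Set.range e) := by
    rw [hG] at hGfin ⊢
    exact mem_submonoid_closure_of_finite hGfin
  -- elements of G are isometries
  have hGiso : ∀ g ∈ G, Isometry (⇑g : (EuclideanSpace ℝ (Fin d)) → (EuclideanSpace ℝ (Fin d))) := by
    intro g hg
    rw [hG] at hg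
    induction hg using Subgroup.closure_induction with
    | mem x hx =>
      obtain ⟨i, rfl⟩ := hx
      rw [he i]; exact hRiso i
    | one => simpa using isometry_id
    | mul x y hx hy ihx ihy =>
      have : ⇑(x * y) = ⇑x ∘ ⇑y := rfl
      rw [this]; exact ihx.comp ihy
    | inv x hx ih =>
      intro a b
      have h := ih (x⁻¹ a) (x⁻¹ b)
      simpa [Equiv.Perm.inv_def] using h.symm
  -- contractions are Lipschitz, hence continuous
  have hfl : ∀ j, LipschitzWith (r j).toNNReal (f j) := by
    intro j
    refine LipschitzWith.of_dist_le_mul fun x y => ?_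
    rw [Real.coe_toNNReal _ (hr0 j), dist_eq_norm, dist_eq_norm]
    exact hf j x y
  have hfc : ∀ j, Continuous (f j) := fun j => (hfl j).continuous
  -- pieces of the invariance of X₀
  have hRX : ∀ i, R i '' X₀ ⊆ X₀ := fun i => by
    conv_rhs => rw [h0inv]
    exact Set.subset_union_left.trans' (Set.subset_iUnion (fun i => R i '' X₀) i)
  have hfX : ∀ j, f j '' X₀ ⊆ X₀ := fun j => by
    conv_rhs => rw [h0inv]
    exact Set.subset_union_right.trans' (Set.subset_iUnion (fun j => f j '' X₀) j)
  -- G maps X₀ onto itself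
  have hMX : ∀ g ∈ Submonoid.closure (Set.range e), g '' X₀ ⊆ X₀ := by
    intro g hg
    induction hg using Submonoid.closure_induction with
    | mem x hx =>
      obtain ⟨i, rfl⟩ := hx
      rw [he i]; exact hRX i
    | one => simp
    | mul x y hx hy ihx ihy =>
      have : ⇑(x * y) = ⇑x ∘ ⇑y := rfl
      rw [this, Set.image_comp]
      exact (Set.image_mono ihy).trans ihx
  have hGX : ∀ g ∈ G, g '' X₀ = X₀ := by
    intro g hg
    refine subset_antisymm (hMX g (hGM g hg)) ?_
    intro x hx
    exact ⟨g⁻¹ x, hMX g⁻¹ (hGM _ (inv_mem hg)) ⟨x, hx, rfl⟩, Equiv.apply_symm_apply g x⟩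
  -- the Hutchinson operator of the IFS {g ∘ f j}
  set T : Set (EuclideanSpace ℝ (Fin d)) → Set (EuclideanSpace ℝ (Fin d)) :=
    fun K => ⋃ g ∈ (G : Set (Equiv.Perm (EuclideanSpace ℝ (Fin d)))), ⋃ j, g '' (f j '' K) with hTdef
  have hmemT : ∀ (K : Set (EuclideanSpace ℝ (Fin d))) (x : (EuclideanSpace ℝ (Fin d))),
      x ∈ T K ↔ ∃ g ∈ G, ∃ j, ∃ u ∈ K, g (f j u) = x := by
    intro K x
    simp only [hTdef, Set.mem_iUnion, SetLike.mem_coe, Set.mem_image, exists_prop]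
    constructor
    · rintro ⟨g, hg, j, y, ⟨u, hu, rfl⟩, rfl⟩
      exact ⟨g, hg, j, u, hu, rfl⟩
    · rintro ⟨g, hg, j, u, hu, rfl⟩
      exact ⟨g, hg, j, f j u, ⟨u, hu, rfl⟩, rfl⟩
  have hTmono : ∀ {K₁ K₂ : Set (EuclideanSpace ℝ (Fin d))}, K₁ ⊆ K₂ → T K₁ ⊆ T K₂ := by
    intro K₁ K₂ h x hx
    rw [hmemT] at hx ⊢
    obtain ⟨g, hg, j, u, hu, rfl⟩ := hx
    exact ⟨g, hg, j, u, h hu, rfl⟩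
  have hTcomp : ∀ {K : Set (EuclideanSpace ℝ (Fin d))}, IsCompact K → IsCompact (T K) := by
    intro K hK
    refine Set.Finite.isCompact_biUnion hGfin fun g hg => isCompact_iUnion fun j => ?_
    exact ((hK.image (hfc j)).image (hGiso g hg).continuous)
  have hTne : ∀ {K : Set (EuclideanSpace ℝ (Fin d))}, K.Nonempty → (T K).Nonempty := by
    intro K ⟨x, hx⟩
    exact ⟨(1 : Equiv.Perm (EuclideanSpace ℝ (Fin d))) (f j₀ x), (hmemT K _).mpr ⟨1, one_mem G, j₀, x, hx, rfl⟩⟩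
  have hTX : T X₀ ⊆ X₀ := by
    intro x hx
    obtain ⟨g, hg, j, u, hu, rfl⟩ := (hmemT X₀ x).mp hx
    rw [← hGX g hg]
    exact ⟨f j u, hfX j ⟨u, hu, rfl⟩, rfl⟩
  -- the iterates
  set K : ℕ → Set (EuclideanSpace ℝ (Fin d)) := fun k => T^[k] X₀ with hKdef
  have hKsucc : ∀ k, K (k + 1) = T (K k) := fun k => Function.iterate_succ_apply' T k X₀
  have hKc : ∀ k, IsCompact (K k) := by
    intro k; induction k with
    | zero => exact h0c
    | succ k ih => rw [hKsucc]; exact hTcomp ih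
  have hKsub : ∀ k, K k ⊆ X₀ := by
    intro k; induction k with
    | zero => exact subset_rfl
    | succ k ih => rw [hKsucc]; exact (hTmono ih).trans hTX
  have hKdec : ∀ k, K (k + 1) ⊆ K k := by
    intro k; induction k with
    | zero => rw [hKsucc]; exact (hTmono (hKsub 0)).trans hTX
    | succ k ih =>
      rw [hKsucc (k+1)]
      exact (hTmono ih).trans (hKsucc k).symm.subset
  have hKne : ∀ k, (K k).Nonempty := by
    intro k; induction k with
    | zero => exact h0ne
    | succ k ih => rw [hKsucc]; exact hTne ih
  set A : Set (EuclideanSpace ℝ (Fin d)) := ⋂ k, K k with hAdef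
  have hAne : A.Nonempty :=
    IsCompact.nonempty_iInter_of_sequence_nonempty_isCompact_isClosed K hKdec hKne (hKc 0)
      (fun k => (hKc k).isClosed)
  have hAclosed : IsClosed A := isClosed_iInter fun k => (hKc k).isClosed
  have hAc : IsCompact A := (hKc 0).of_isClosed_subset hAclosed (Set.iInter_subset K 0)
  have hAsub : ∀ k, A ⊆ K k := fun k => Set.iInter_subset K k
  -- T A = A
  have hTA1 : T A ⊆ A := by
    intro x hx
    rw [hAdef, Set.mem_iInter]
    intro k
    cases k with
    | zero => exact hTX (hTmono (hAsub 0) hx)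
    | succ k => rw [hKsucc]; exact hTmono (hAsub k) hx
  have hTA2 : A ⊆ T A := by
    intro a ha
    -- the closed set of "preimages of a"
    set F : Set (EuclideanSpace ℝ (Fin d)) := ⋃ g ∈ (G : Set (Equiv.Perm (EuclideanSpace ℝ (Fin d)))), ⋃ j, (fun x => g (f j x)) ⁻¹' {a}
      with hFdef
    have hFclosed : IsClosed F := by
      refine Set.Finite.isClosed_biUnion hGfin fun g hg => isClosed_iUnion_of_finite fun j => ?_
      exact IsClosed.preimage ((hGiso g hg).continuous.comp (hfc j)) isClosed_singleton
    have hSne : ∀ k, (K k ∩ F).Nonempty := by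
      intro k
      have haK : a ∈ K (k + 1) := hAsub (k + 1) ha
      rw [hKsucc] at haK
      obtain ⟨g, hg, j, u, hu, hgu⟩ := (hmemT (K k) a).mp haK
      refine ⟨u, hu, ?_⟩
      rw [hFdef]
      simp only [Set.mem_iUnion, SetLike.mem_coe, Set.mem_preimage, Set.mem_singleton_iff]
      exact ⟨g, hg, j, hgu⟩
    have hint : (⋂ k, K k ∩ F).Nonempty := by
      refine IsCompact.nonempty_iInter_of_sequence_nonempty_isCompact_isClosed _
        (fun k => Set.inter_subset_inter_left F (hKdec k)) hSne
        ((hKc 0).inter_right hFclosed)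
        (fun k => (hKc k).isClosed.inter hFclosed)
    obtain ⟨x, hx⟩ := hint
    rw [Set.mem_iInter] at hx
    have hxA : x ∈ A := by
      rw [hAdef, Set.mem_iInter]; exact fun k => (hx k).1
    have hxF : x ∈ F := (hx 0).2
    rw [hFdef] at hxF
    simp only [Set.mem_iUnion, SetLike.mem_coe, Set.mem_preimage, Set.mem_singleton_iff] at hxF
    obtain ⟨g, hg, j, hgx⟩ := hxF
    exact (hmemT A a).mpr ⟨g, hg, j, x, hxA, hgx⟩
  have hTA : T A = A := subset_antisymm hTA1 hTA2
  -- decomposition of elements of G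
  have hdec : ∀ g ∈ G, g = 1 ∨ ∃ i g', g' ∈ G ∧ g = e i * g' := by
    intro g hg
    obtain ⟨l, hl, hprod⟩ := Submonoid.exists_list_of_mem_closure (hGM g hg)
    cases l with
    | nil => left; simp at hprod; exact hprod.symm
    | cons x t =>
      right
      obtain ⟨i, rfl⟩ := hl x List.mem_cons_self
      refine ⟨i, t.prod, ?_, ?_⟩
      · have ht : t.prod ∈ Submonoid.closure (Set.range e) :=
          list_prod_mem fun y hy => Submonoid.subset_closure (hl y (List.mem_cons_of_mem _ hy))
        rw [hG]
        exact Submonoid.closure_le.mpr (Subgroup.subset_closure (k := Set.range e)) ht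
      · rw [← hprod, List.prod_cons]
  -- A is an invariant set of the R-IFS
  have hAinv : A = (⋃ i, R i '' A) ∪ (⋃ j, f j '' A) := by
    apply subset_antisymm
    · intro a ha
      rw [← hTA] at ha
      obtain ⟨g, hg, j, x, hx, rfl⟩ := (hmemT A _).mp ha
      rcases hdec g hg with h1 | ⟨i, g', hg', rfl⟩
      · subst h1
        refine Set.mem_union_right _ (Set.mem_iUnion.mpr ⟨j, ⟨x, hx, rfl⟩⟩)
      · refine Set.mem_union_left _ (Set.mem_iUnion.mpr ⟨i, ⟨g' (f j x), ?_, ?_⟩⟩)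
        · rw [← hTA]; exact (hmemT A _).mpr ⟨g', hg', j, x, hx, rfl⟩
        · rw [← he i]; rfl
    · refine Set.union_subset ?_ ?_
      · refine Set.iUnion_subset fun i => ?_
        rintro _ ⟨y, hy, rfl⟩
        rw [← hTA] at hy ⊢
        obtain ⟨g, hg, j, x, hx, rfl⟩ := (hmemT A _).mp hy
        refine (hmemT A _).mpr ⟨e i * g, mul_mem (heG i) hg, j, x, hx, ?_⟩
        rw [← he i]; rfl
      · refine Set.iUnion_subset fun j => ?_
        rintro _ ⟨x, hx, rfl⟩
        rw [← hTA]
        exact (hmemT A _).mpr ⟨1, one_mem G, j, x, hx, rfl⟩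
  -- minimality
  have hX0A : X₀ ⊆ A := h0min A hAne hAclosed hAc.isBounded hAinv
  have hAX0 : A ⊆ X₀ := (hAsub 0)
  have hAeq : A = X₀ := subset_antisymm hAX0 hX0A
  have goal1 : X₀ = T X₀ := by rw [← hAeq, hTA]
  refine ⟨goal1, ?_⟩
  -- uniqueness via the Hausdorff distance
  intro B hBne hBc hBeq
  have hBT : B = T B := hBeq
  -- the contraction ratio
  have hune : (Finset.univ : Finset (Fin n)).Nonempty := ⟨j₀, Finset.mem_univ j₀⟩
  set s : ℝ := Finset.univ.sup' hune r with hsdef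
  have hs0 : 0 ≤ s := (hr0 j₀).trans (Finset.le_sup' r (Finset.mem_univ j₀))
  have hrs : ∀ j, r j ≤ s := fun j => Finset.le_sup' r (Finset.mem_univ j)
  have hs1 : s < 1 := (Finset.sup'_lt_iff hune).mpr fun j _ => hr1 j
  set c : ENNReal := ENNReal.ofReal s with hcdef
  have hc1 : c < 1 := by
    rw [hcdef]
    exact ENNReal.ofReal_lt_one.mpr hs1
  have hcne : c ≠ ⊤ := by
    rw [hcdef]; exact ENNReal.ofReal_ne_top
  have hfe : ∀ j (x y : (EuclideanSpace ℝ (Fin d))), edist (f j x) (f j y) ≤ c * edist x y := by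
    intro j x y
    rw [edist_dist, edist_dist, hcdef, ← ENNReal.ofReal_mul hs0]
    refine ENNReal.ofReal_le_ofReal ?_
    calc dist (f j x) (f j y) = ‖f j x - f j y‖ := dist_eq_norm _ _
      _ ≤ r j * ‖x - y‖ := hf j x y
      _ ≤ s * ‖x - y‖ := mul_le_mul_of_nonneg_right (hrs j) (norm_nonneg _)
      _ = s * dist x y := by rw [dist_eq_norm]
  -- the contraction estimate for the Hutchinson operator
  have hcontr : ∀ (P Q : Set (EuclideanSpace ℝ (Fin d))), IsCompact P → P.Nonempty → IsCompact Q → Q.Nonempty →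
      EMetric.hausdorffEdist (T P) (T Q) ≤ c * EMetric.hausdorffEdist P Q := by
    have key : ∀ (P Q : Set (EuclideanSpace ℝ (Fin d))), IsCompact Q → Q.Nonempty →
        ∀ x ∈ T P, ∃ y ∈ T Q, edist x y ≤ c * EMetric.hausdorffEdist P Q := by
      intro P Q hQc hQne x hx
      obtain ⟨g, hg, j, u, hu, rfl⟩ := (hmemT P x).mp hx
      obtain ⟨v, hv, hdv⟩ := hQc.exists_infEdist_eq_edist hQne u
      refine ⟨g (f j v), (hmemT Q _).mpr ⟨g, hg, j, v, hv, rfl⟩, ?_⟩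
      calc edist (g (f j u)) (g (f j v)) = edist (f j u) (f j v) := (hGiso g hg).edist_eq _ _
        _ ≤ c * edist u v := hfe j u v
        _ = c * EMetric.infEdist u Q := by exact congrArg (c * ·) hdv.symm
        _ ≤ c * EMetric.hausdorffEdist P Q :=
            mul_le_mul_right (EMetric.infEdist_le_hausdorffEdist_of_mem hu) c
    intro P Q hPc hPne hQc hQne
    refine EMetric.hausdorffEdist_le_of_mem_edist (key P Q hQc hQne) ?_
    intro x hx
    obtain ⟨y, hy, hxy⟩ := key Q P hPc hPne x hx
    refine ⟨y, hy, ?_⟩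
    replace hxy : edist x y ≤ c * EMetric.hausdorffEdist P Q := hxy.trans_eq (congrArg (c * ·) Metric.hausdorffEDist_comm)
    exact hxy
  set H : ENNReal := EMetric.hausdorffEdist B X₀ with hHdef
  have hHne : H ≠ ⊤ :=
    Metric.hausdorffEdist_ne_top_of_nonempty_of_bounded hBne h0ne hBc.isBounded h0c.isBounded
  have hHle : H ≤ c * H := by
    have := hcontr B X₀ hBc hBne h0c h0ne
    rw [← hBT, ← goal1] at this
    exact this
  have hH0 : H = 0 := by
    by_contra h0
    have h1 : c * H < 1 * H := (ENNReal.mul_lt_mul_iff_left h0 hHne).mpr hc1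
    rw [one_mul] at h1
    exact absurd (hHle.trans_lt h1) (lt_irrefl H)
  have : B = X₀ :=
    (EMetric.hausdorffEdist_zero_iff_eq_of_closed hBc.isClosed h0c.isClosed).mp hH0
  exact this
end

section
/- (Corollary of Theorem 4 for a single periodic isometry) Let R : ℝ^d → ℝ^d be a surjective isometry fixing the origin with R^p = id for some p ≥ 1, and let f₁,…,fₙ : ℝ^d → ℝ^d (n ≥ 1) be Banach contractions. Then the minimal invariant set X₀ of the R-IFS {R, f₁,…,fₙ} is the unique nonempty compact set A with A = ⋃_{k=0}^{p−1} ⋃_{j=1}^{n} R^k(fⱼ(A)). -/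
open Set EMetric ENNReal

/-- Auxiliary uniqueness lemma: two nonempty compact sets both equal to the union of
their images under a finite family of contractions are equal. -/
lemma aux_unique_fixed {ι : Type*} [Fintype ι] {E : Type*} [MetricSpace E]
    (g : ι → E → E) (c : ι → NNReal)
    (hc : ∀ i, c i < 1) (hg : ∀ i, LipschitzWith (c i) (g i))
    (A B : Set E) (hAne : A.Nonempty) (hAc : IsCompact A)
    (hBne : B.Nonempty) (hBc : IsCompact B)
    (hA : A = ⋃ i, g i '' A) (hB : B = ⋃ i, g i '' B) : A = B := by
  rcases isEmpty_or_nonempty ι with hι | hι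
  · exact absurd (hA ▸ hAne) (by simp)
  set c₀ : NNReal := Finset.univ.sup c with hc₀def
  have hic₀ : ∀ i, c i ≤ c₀ := fun i => Finset.le_sup (Finset.mem_univ i)
  have hc₀1 : c₀ < 1 := Finset.sup_lt_iff (by norm_num) |>.mpr fun i _ => hc i
  set D := hausdorffEdist A B with hDdef
  have hDtop : D ≠ ⊤ :=
    Metric.hausdorffEdist_ne_top_of_nonempty_of_bounded hAne hBne hAc.isBounded hBc.isBounded
  have key : ∀ (S T : Set E), IsCompact T → T.Nonempty → (T = ⋃ i, g i '' T) →
      ∀ x ∈ (⋃ i, g i '' S), ∃ y ∈ T, edist x y ≤ c₀ * hausdorffEdist S T := by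
    intro S T hTc hTne hT x hx
    obtain ⟨i, a, haS, rfl⟩ : ∃ i a, a ∈ S ∧ g i a = x := by simpa using hx
    obtain ⟨y, hyT, hay⟩ := hTc.exists_infEdist_eq_edist hTne a
    refine ⟨g i y, hT ▸ mem_iUnion.2 ⟨i, mem_image_of_mem _ hyT⟩, ?_⟩
    calc edist (g i a) (g i y) ≤ c i * edist a y := hg i a y
      _ ≤ c₀ * hausdorffEdist S T := by
          refine mul_le_mul' (by exact_mod_cast hic₀ i) ?_
          rw [← hay]
          exact infEdist_le_hausdorffEdist_of_mem haS
  have hDle : D ≤ (c₀ : ℝ≥0∞) * D := by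
    refine hausdorffEdist_le_of_mem_edist (fun x hx => ?_) (fun x hx => ?_)
    · exact key A B hBc hBne hB x (hA ▸ hx)
    · have := key B A hAc hAne hA x (hB ▸ hx)
      rwa [show hausdorffEdist B A = hausdorffEdist A B from Metric.hausdorffEDist_comm] at this
  have hD0 : D = 0 := by
    by_contra h
    have hlt : (c₀ : ℝ≥0∞) * D < 1 * D :=
      ENNReal.mul_lt_mul_left h hDtop (by exact_mod_cast hc₀1)
    rw [one_mul] at hlt
    exact absurd (hDle.trans_lt hlt) (lt_irrefl D)
  exact hausdorffEdist_zero_iff_eq_of_closed hAc.isClosed hBc.isClosed |>.1 hD0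

/-- Corollary of Theorem 4 for a single periodic isometry: if `R` is a surjective isometry
fixing `0` with `R^p = id` (`p ≥ 1`), then the minimal invariant set `X₀` of the R-IFS
`{R, f₁,…,fₙ}` is the unique nonempty compact set `A` with
`A = ⋃_{k=0}^{p-1} ⋃_j R^k (fⱼ (A))`. -/
theorem minimal_invariant_set_of_periodic_isometry {d n : ℕ} (hn : 0 < n)
    (R : EuclideanSpace ℝ (Fin d) → EuclideanSpace ℝ (Fin d))
    (hRiso : Isometry R) (hRsurj : Function.Surjective R) (hR0 : R 0 = 0)
    (p : ℕ) (hp : 1 ≤ p) (hRp : R^[p] = id)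
    (f : Fin n → EuclideanSpace ℝ (Fin d) → EuclideanSpace ℝ (Fin d))
    (r : Fin n → ℝ) (hr0 : ∀ j, 0 ≤ r j) (hr1 : ∀ j, r j < 1)
    (hf : ∀ j x y, ‖f j x - f j y‖ ≤ r j * ‖x - y‖)
    -- X₀ is the minimal invariant set of the R-IFS {R, f₁,…,fₙ}
    (X₀ : Set (EuclideanSpace ℝ (Fin d)))
    (h0ne : X₀.Nonempty) (h0c : IsCompact X₀)
    (h0inv : X₀ = (R '' X₀) ∪ (⋃ j, f j '' X₀))
    (h0min : ∀ X : Set (EuclideanSpace ℝ (Fin d)), X.Nonempty → IsClosed X →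
      Bornology.IsBounded X → X = (R '' X) ∪ (⋃ j, f j '' X) → X₀ ⊆ X) :
    X₀ = (⋃ k ∈ Finset.range p, ⋃ j, R^[k] '' (f j '' X₀)) ∧
    ∀ A : Set (EuclideanSpace ℝ (Fin d)), A.Nonempty → IsCompact A →
      A = (⋃ k ∈ Finset.range p, ⋃ j, R^[k] '' (f j '' A)) → A = X₀ := by
  -- basic facts
  have hlip : ∀ j, LipschitzWith ⟨r j, hr0 j⟩ (f j) := fun j =>
    LipschitzWith.of_dist_le_mul fun x y => by
      rw [dist_eq_norm, dist_eq_norm]; exact hf j x y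
  have hRkiso : ∀ k, Isometry (R^[k]) := fun k => by
    induction k with
    | zero => simpa using isometry_id
    | succ k ih => rw [Function.iterate_succ']; exact hRiso.comp ih
  have himg : ∀ (k : ℕ) (S : Set (EuclideanSpace ℝ (Fin d))),
      R '' (R^[k] '' S) = R^[k + 1] '' S := fun k S => by
    rw [← Set.image_comp, ← Function.iterate_succ']
  have hRsub : R '' X₀ ⊆ X₀ := subset_union_left.trans h0inv.ge
  have hfsub : ∀ j, f j '' X₀ ⊆ X₀ := fun j =>
    ((subset_iUnion (fun j => f j '' X₀) j).trans subset_union_right).trans h0inv.ge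
  have hiter_sub : ∀ k, R^[k] '' X₀ ⊆ X₀ := by
    intro k
    induction k with
    | zero => simp
    | succ k ih => rw [← himg]; exact (Set.image_mono ih).trans hRsub
  have hRX : R '' X₀ = X₀ := by
    refine Set.Subset.antisymm hRsub ?_
    calc X₀ = R^[p] '' X₀ := by rw [hRp, Set.image_id]
      _ = R '' (R^[p - 1] '' X₀) := by rw [himg, Nat.sub_add_cancel hp]
      _ ⊆ R '' X₀ := Set.image_mono (hiter_sub _)
  have hiterEq : ∀ k, R^[k] '' X₀ = X₀ := by
    intro k
    induction k with
    | zero => simp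
    | succ k ih => rw [← himg, ih, hRX]
  set Y := ⋃ k ∈ Finset.range p, ⋃ j, R^[k] '' (f j '' X₀) with hYdef
  have memY : ∀ k, k < p → ∀ j, R^[k] '' (f j '' X₀) ⊆ Y := by
    intro k hk j x hx
    rw [hYdef]
    simp only [Set.mem_iUnion, Finset.mem_range]
    exact ⟨k, hk, j, hx⟩
  have hYsubX : Y ⊆ X₀ := by
    rw [hYdef]
    simp only [Set.iUnion_subset_iff]
    intro k _ j
    exact (Set.image_mono (hfsub j)).trans (hiterEq k).subset
  have hfsubY : ∀ j, f j '' X₀ ⊆ Y := fun j => by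
    have := memY 0 hp j
    simpa using this
  have hYne : Y.Nonempty := by
    obtain ⟨x, hx⟩ := h0ne
    exact ⟨f ⟨0, hn⟩ x, hfsubY _ (mem_image_of_mem _ hx)⟩
  have hYc : IsCompact Y := by
    rw [hYdef]
    refine (Finset.range p).finite_toSet.isCompact_biUnion fun k _ => ?_
    exact isCompact_iUnion fun j =>
      (h0c.image (hlip j).continuous).image (hRiso.continuous.iterate k)
  have hRY : R '' Y = Y := by
    refine Set.Subset.antisymm ?_ ?_
    · rintro x hx
      obtain ⟨y, hy, rfl⟩ := hx
      rw [hYdef] at hy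
      simp only [Set.mem_iUnion, Finset.mem_range] at hy
      obtain ⟨k, hk, j, hyk⟩ := hy
      have hx' : R y ∈ R^[k + 1] '' (f j '' X₀) := by
        rw [← himg]; exact mem_image_of_mem _ hyk
      by_cases h : k + 1 < p
      · exact memY (k + 1) h j hx'
      · have heq : k + 1 = p := by omega
        rw [heq, hRp, Set.image_id] at hx'
        exact hfsubY j hx'
    · intro x hx
      rw [hYdef] at hx
      simp only [Set.mem_iUnion, Finset.mem_range] at hx
      obtain ⟨k, hk, j, hxk⟩ := hx
      rcases k with _ | m
      · have hxk' : x ∈ f j '' X₀ := by simpa using hxk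
        have : x ∈ R '' (R^[p - 1] '' (f j '' X₀)) := by
          rw [himg, Nat.sub_add_cancel hp, hRp, Set.image_id]
          exact hxk'
        exact Set.image_mono (memY (p - 1) (by omega) j) this
      · rw [← himg] at hxk
        exact Set.image_mono (memY m (by omega) j) hxk
  have hYinv : Y = (R '' Y) ∪ ⋃ j, f j '' Y := by
    rw [hRY]
    refine (Set.union_eq_self_of_subset_right ?_).symm
    exact Set.iUnion_subset fun j => (Set.image_mono hYsubX).trans (hfsubY j)
  have hXY : X₀ = Y :=
    Set.Subset.antisymm (h0min Y hYne hYc.isClosed hYc.isBounded hYinv) hYsubX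
  -- conversion to an indexed union over a fintype
  have hconv : ∀ S : Set (EuclideanSpace ℝ (Fin d)),
      (⋃ k ∈ Finset.range p, ⋃ j, R^[k] '' (f j '' S)) =
      ⋃ i : Fin p × Fin n, (R^[(i.1 : ℕ)] ∘ f i.2) '' S := by
    intro S
    ext x
    simp only [Set.mem_iUnion, Finset.mem_range, Set.image_comp]
    constructor
    · rintro ⟨k, hk, j, hx⟩; exact ⟨(⟨k, hk⟩, j), hx⟩
    · rintro ⟨⟨k, j⟩, hx⟩; exact ⟨k, k.isLt, j, hx⟩
  have hglip : ∀ i : Fin p × Fin n, LipschitzWith ⟨r i.2, hr0 i.2⟩ (R^[(i.1 : ℕ)] ∘ f i.2) :=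
    fun i => by
      have := ((hRkiso i.1).lipschitz).comp (hlip i.2)
      exact this.weaken (one_mul _).le
  refine ⟨hXY, fun A hAne hAc hA => ?_⟩
  refine aux_unique_fixed (fun i : Fin p × Fin n => R^[(i.1 : ℕ)] ∘ f i.2)
    (fun i => ⟨r i.2, hr0 i.2⟩) (fun i => by exact_mod_cast hr1 i.2) hglip
    A X₀ hAne hAc h0ne h0c ?_ ?_
  · rw [← hconv]; exact hA
  · rw [← hconv]; exact hXY
end

section
/- (Example: Sierpinski gasket with two mappings) In the complex plane ℂ, let f₁(z) = e^{2πi/3} z and f₂(z) = z/2 + 1. Then the minimal invariant set of the R-IFS {f₁, f₂} (where f₁ is a surjective isometry fixing 0 with f₁³ = id and f₂ is a 1/2-contraction) is the unique nonempty compact set A ⊆ ℂ satisfying A = f₂(A) ∪ (f₁∘f₂)(A) ∪ (f₁∘f₁∘f₂)(A). -/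
open EMetric Metric Set TopologicalSpace Function Filter

private lemma hEdist_image_le {K : NNReal} {g : ℂ → ℂ} (hg : LipschitzWith K g) {s t : Set ℂ}
    (hs : IsCompact s) (hsne : s.Nonempty) (ht : IsCompact t) (htne : t.Nonempty) :
    hausdorffEdist (g '' s) (g '' t) ≤ K * hausdorffEdist s t := by
  have main : ∀ (s t : Set ℂ), IsCompact t → t.Nonempty →
      ∀ x ∈ g '' s, infEdist x (g '' t) ≤ K * hausdorffEdist s t := by
    rintro s t ht htne _ ⟨x, hx, rfl⟩
    obtain ⟨y, hy, hxy⟩ := ht.exists_infEdist_eq_edist htne x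
    calc infEdist (g x) (g '' t) ≤ edist (g x) (g y) :=
          infEdist_le_edist_of_mem ⟨y, hy, rfl⟩
      _ ≤ K * edist x y := hg.edist_le_mul x y
      _ = K * infEdist x t := congrArg (fun e => (K : ENNReal) * e) hxy.symm
      _ ≤ K * hausdorffEdist s t :=
          mul_le_mul_right (infEdist_le_hausdorffEdist_of_mem hx) _
  refine hausdorffEdist_le_of_infEdist (main s t ht htne) fun x hx => ?_
  rw [show hausdorffEdist s t = hausdorffEdist t s from hausdorffEdist_comm]
  exact main t s hs hsne x hx

private lemma hEdist_union_le {s t s' t' : Set ℂ} :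
    hausdorffEdist (s ∪ t) (s' ∪ t') ≤ max (hausdorffEdist s s') (hausdorffEdist t t') := by
  have main : ∀ (s t s' t' : Set ℂ), ∀ x ∈ s ∪ t,
      infEdist x (s' ∪ t') ≤ max (hausdorffEdist s s') (hausdorffEdist t t') := by
    rintro s t s' t' x (hx | hx)
    · exact le_trans (infEdist_anti subset_union_left)
        (le_trans (infEdist_le_hausdorffEdist_of_mem hx) (le_max_left _ _))
    · exact le_trans (infEdist_anti subset_union_right)
        (le_trans (infEdist_le_hausdorffEdist_of_mem hx) (le_max_right _ _))
  refine hausdorffEdist_le_of_infEdist (main s t s' t') fun x hx => ?_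
  calc infEdist x (s ∪ t) ≤ max (hausdorffEdist s' s) (hausdorffEdist t' t) :=
        main s' t' s t x hx
    _ = max (hausdorffEdist s s') (hausdorffEdist t t') := by
        rw [show hausdorffEdist s' s = hausdorffEdist s s' from hausdorffEdist_comm,
          show hausdorffEdist t' t = hausdorffEdist t t' from hausdorffEdist_comm]

open Complex in
/-- Example (Sierpinski gasket with two mappings): with `f₁ z = e^{2πi/3} z` (a rotation of
order 3) and `f₂ z = z/2 + 1`, the minimal invariant set of the R-IFS `{f₁, f₂}` is the
unique nonempty compact set `A ⊆ ℂ` with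
`A = f₂(A) ∪ (f₁ ∘ f₂)(A) ∪ (f₁ ∘ f₁ ∘ f₂)(A)` (the Sierpinski gasket). -/
theorem sierpinski_gasket_two_maps
    (f₁ f₂ : ℂ → ℂ)
    (hf₁ : ∀ z, f₁ z = Complex.exp (2 * Real.pi * Complex.I / 3) * z)
    (hf₂ : ∀ z, f₂ z = z / 2 + 1)
    -- X₀ is the minimal invariant set of the R-IFS {f₁, f₂}
    (X₀ : Set ℂ)
    (h0ne : X₀.Nonempty) (h0c : IsCompact X₀)
    (h0inv : X₀ = (f₁ '' X₀) ∪ (f₂ '' X₀))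
    (h0min : ∀ X : Set ℂ, X.Nonempty → IsClosed X → Bornology.IsBounded X →
      X = (f₁ '' X) ∪ (f₂ '' X) → X₀ ⊆ X) :
    X₀ = (f₂ '' X₀) ∪ ((f₁ ∘ f₂) '' X₀) ∪ ((f₁ ∘ f₁ ∘ f₂) '' X₀) ∧
    ∀ A : Set ℂ, A.Nonempty → IsCompact A →
      A = (f₂ '' A) ∪ ((f₁ ∘ f₂) '' A) ∪ ((f₁ ∘ f₁ ∘ f₂) '' A) → A = X₀ := by
  have hωabs : ‖(Complex.exp (2 * Real.pi * Complex.I / 3))‖ = 1 := by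
    have h : (2 * (Real.pi : ℂ) * Complex.I / 3) = ((2 * Real.pi / 3 : ℝ) : ℂ) * Complex.I := by
      push_cast; ring
    rw [h, Complex.norm_exp_ofReal_mul_I]
  have hω3 : (Complex.exp (2 * Real.pi * Complex.I / 3)) ^ 3 = 1 := by
    rw [← Complex.exp_nat_mul]
    have h : ((3 : ℕ) : ℂ) * (2 * Real.pi * Complex.I / 3) = 2 * Real.pi * Complex.I := by
      push_cast; ring
    rw [h, Complex.exp_two_pi_mul_I]
  -- f₁ is an isometry, f₂ is a 1/2-contraction
  have hL1 : LipschitzWith 1 f₁ := by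
    refine LipschitzWith.of_dist_le_mul fun x y => ?_
    rw [hf₁, hf₁, Complex.dist_eq, ← mul_sub, norm_mul, hωabs, Complex.dist_eq]
    simp
  have hL2 : LipschitzWith (1/2 : NNReal) f₂ := by
    refine LipschitzWith.of_dist_le_mul fun x y => ?_
    rw [hf₂, hf₂, Complex.dist_eq, Complex.dist_eq,
      show x / 2 + 1 - (y / 2 + 1) = (x - y) / 2 from by ring, norm_div]
    simp
    exact le_of_eq (div_eq_inv_mul _ _)
  have hg1 : LipschitzWith (1/2 : NNReal) f₂ := hL2
  have hg2 : LipschitzWith (1/2 : NNReal) (f₁ ∘ f₂) := by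
    simpa using hL1.comp hL2
  have hg3 : LipschitzWith (1/2 : NNReal) (f₁ ∘ f₁ ∘ f₂) := by
    simpa using hL1.comp (hL1.comp hL2)
  -- f₁ has order 3
  have hf1cube : ∀ z, f₁ (f₁ (f₁ z)) = z := by
    intro z
    rw [hf₁, hf₁, hf₁,
      show Complex.exp (2 * Real.pi * Complex.I / 3) *
        (Complex.exp (2 * Real.pi * Complex.I / 3) *
          (Complex.exp (2 * Real.pi * Complex.I / 3) * z)) =
        (Complex.exp (2 * Real.pi * Complex.I / 3)) ^ 3 * z from by ring, hω3, one_mul]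
  -- The set operator
  let S : Set ℂ → Set ℂ :=
    fun A => (f₂ '' A) ∪ ((f₁ ∘ f₂) '' A) ∪ ((f₁ ∘ f₁ ∘ f₂) '' A)
  have hScompact : ∀ A : Set ℂ, IsCompact A → IsCompact (S A) := fun A hA =>
    ((hA.image hg1.continuous).union (hA.image hg2.continuous)).union
      (hA.image hg3.continuous)
  have hSne : ∀ A : Set ℂ, A.Nonempty → (S A).Nonempty := fun A hA =>
    (hA.image f₂).mono (subset_union_left.trans subset_union_left)
  -- The Hutchinson operator on nonempty compact sets
  let F : NonemptyCompacts ℂ → NonemptyCompacts ℂ :=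
    fun K => ⟨⟨S K, hScompact K K.isCompact⟩, hSne K K.nonempty⟩
  -- image identities under f₁
  have himg2 : ∀ B : Set ℂ, f₁ '' (f₂ '' B) = (f₁ ∘ f₂) '' B :=
    fun B => (Set.image_comp f₁ f₂ B).symm
  have himg3 : ∀ B : Set ℂ, f₁ '' ((f₁ ∘ f₂) '' B) = (f₁ ∘ f₁ ∘ f₂) '' B :=
    fun B => (Set.image_comp f₁ (f₁ ∘ f₂) B).symm
  have himg1 : ∀ B : Set ℂ, f₁ '' ((f₁ ∘ f₁ ∘ f₂) '' B) = f₂ '' B := by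
    intro B
    rw [← Set.image_comp,
      show f₁ ∘ (f₁ ∘ f₁ ∘ f₂) = f₂ from funext fun z => hf1cube (f₂ z)]
  -- F is a contraction
  have hF : ContractingWith (1/2 : NNReal) F := by
    constructor
    · exact NNReal.half_lt_self one_ne_zero
    · intro K K'
      have h1 := hEdist_image_le hg1 K.isCompact K.nonempty K'.isCompact K'.nonempty
      have h2 := hEdist_image_le hg2 K.isCompact K.nonempty K'.isCompact K'.nonempty
      have h3 := hEdist_image_le hg3 K.isCompact K.nonempty K'.isCompact K'.nonempty
      show hausdorffEdist (S (K : Set ℂ)) (S (K' : Set ℂ)) ≤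
        ((1/2 : NNReal) : ENNReal) * hausdorffEdist (K : Set ℂ) (K' : Set ℂ)
      exact le_trans hEdist_union_le
        (max_le (le_trans hEdist_union_le (max_le h1 h2)) h3)
  haveI : Nonempty (NonemptyCompacts ℂ) :=
    ⟨⟨⟨{0}, isCompact_singleton⟩, Set.singleton_nonempty 0⟩⟩
  let Afp : NonemptyCompacts ℂ := ContractingWith.fixedPoint F hF
  have hAfix : F Afp = Afp := hF.fixedPoint_isFixedPt
  have hA : S (Afp : Set ℂ) = (Afp : Set ℂ) :=
    congrArg (fun K : NonemptyCompacts ℂ => (K : Set ℂ)) hAfix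
  -- A is invariant under f₁
  have hAf1 : f₁ '' (Afp : Set ℂ) = (Afp : Set ℂ) := by
    have key : f₁ '' (S (Afp : Set ℂ)) = S (Afp : Set ℂ) := by
      show f₁ '' (_ ∪ _ ∪ _) = _
      rw [Set.image_union, Set.image_union, himg2, himg3, himg1]
      show _ = f₂ '' _ ∪ (f₁ ∘ f₂) '' _ ∪ (f₁ ∘ f₁ ∘ f₂) '' _
      rw [Set.union_comm, ← Set.union_assoc]
    rw [hA] at key
    exact key
  have hAinv : (Afp : Set ℂ) = f₁ '' (Afp : Set ℂ) ∪ f₂ '' (Afp : Set ℂ) := by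
    rw [hAf1]
    have hsub : f₂ '' (Afp : Set ℂ) ⊆ (Afp : Set ℂ) := by
      conv_rhs => rw [← hA]
      exact subset_union_left.trans subset_union_left
    exact (Set.union_eq_self_of_subset_right hsub).symm
  -- minimality: X₀ ⊆ A
  have hXA : X₀ ⊆ (Afp : Set ℂ) :=
    h0min _ Afp.nonempty Afp.isCompact.isClosed Afp.isCompact.isBounded hAinv
  -- A ⊆ X₀
  have h1sub : f₁ '' X₀ ⊆ X₀ := by
    conv_rhs => rw [h0inv]
    exact subset_union_left
  have h2sub : f₂ '' X₀ ⊆ X₀ := by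
    conv_rhs => rw [h0inv]
    exact subset_union_right
  have hSsub : ∀ B : Set ℂ, B ⊆ X₀ → S B ⊆ X₀ := by
    intro B hB
    have hb2 : f₂ '' B ⊆ X₀ := (Set.image_mono (f := f₂) hB).trans h2sub
    refine Set.union_subset (Set.union_subset hb2 ?_) ?_
    · calc (f₁ ∘ f₂) '' B = f₁ '' (f₂ '' B) := Set.image_comp f₁ f₂ B
        _ ⊆ f₁ '' X₀ := Set.image_mono (f := f₁) hb2
        _ ⊆ X₀ := h1sub
    · calc (f₁ ∘ f₁ ∘ f₂) '' B = f₁ '' ((f₁ ∘ f₂) '' B) := Set.image_comp f₁ (f₁ ∘ f₂) B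
        _ ⊆ f₁ '' X₀ := Set.image_mono (f := f₁) (by
            calc (f₁ ∘ f₂) '' B = f₁ '' (f₂ '' B) := Set.image_comp f₁ f₂ B
              _ ⊆ f₁ '' X₀ := Set.image_mono (f := f₁) hb2
              _ ⊆ X₀ := h1sub)
        _ ⊆ X₀ := h1sub
  let K₀ : NonemptyCompacts ℂ := ⟨⟨X₀, h0c⟩, h0ne⟩
  have hiter : ∀ n, ((F^[n] K₀ : NonemptyCompacts ℂ) : Set ℂ) ⊆ X₀ := by
    intro n
    induction n with
    | zero => exact subset_rfl
    | succ n ih =>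
      rw [Function.iterate_succ_apply']
      exact hSsub _ ih
  have htend : Filter.Tendsto (fun n => F^[n] K₀) Filter.atTop (nhds Afp) :=
    hF.tendsto_iterate_fixedPoint K₀
  have hdist : Filter.Tendsto (fun n => dist (F^[n] K₀) Afp) Filter.atTop (nhds 0) :=
    tendsto_iff_dist_tendsto_zero.mp htend
  have hAX : (Afp : Set ℂ) ⊆ X₀ := by
    intro x hx
    have hle : ∀ n, infDist x X₀ ≤ dist (F^[n] K₀) Afp := by
      intro n
      calc infDist x X₀ ≤ infDist x ((F^[n] K₀ : NonemptyCompacts ℂ) : Set ℂ) :=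
            infDist_le_infDist_of_subset (hiter n) (F^[n] K₀).nonempty
        _ ≤ hausdorffDist ((Afp : NonemptyCompacts ℂ) : Set ℂ)
              ((F^[n] K₀ : NonemptyCompacts ℂ) : Set ℂ) :=
            infDist_le_hausdorffDist_of_mem hx (edist_ne_top Afp (F^[n] K₀))
        _ = dist Afp (F^[n] K₀) := NonemptyCompacts.dist_eq.symm
        _ = dist (F^[n] K₀) Afp := dist_comm _ _
    have h0 : infDist x X₀ ≤ 0 := ge_of_tendsto hdist (Filter.Eventually.of_forall hle)
    exact (h0c.isClosed.mem_iff_infDist_zero h0ne).2 (le_antisymm h0 infDist_nonneg)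
  have hXeq : X₀ = (Afp : Set ℂ) := Set.Subset.antisymm hXA hAX
  constructor
  · show X₀ = S X₀
    rw [hXeq, hA]
  · intro A' hne hc heq
    let K' : NonemptyCompacts ℂ := ⟨⟨A', hc⟩, hne⟩
    have hfix : Function.IsFixedPt F K' := NonemptyCompacts.ext heq.symm
    have : K' = Afp := hF.fixedPoint_unique hfix
    calc A' = ((K' : NonemptyCompacts ℂ) : Set ℂ) := rfl
      _ = (Afp : Set ℂ) := congrArg (fun K : NonemptyCompacts ℂ => (K : Set ℂ)) this
      _ = X₀ := hXeq.symm
end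

section
/- (Example: fractal n-gons) Fix n ≥ 1, let b = cos(2π/n) + i·sin(2π/n) ∈ ℂ and let λ ∈ ℂ with |λ| < 1. Consider on ℂ the R-IFS {g, f} with g(z) = b·z (a surjective isometry fixing 0) and f(z) = λz + 1 (a contraction). Then the minimal invariant set of {g, f} is the unique nonempty compact set A ⊆ ℂ satisfying A = ⋃_{k=1}^{n} (b^k λ · A + b^k), i.e. A = ⋃_{k=1}^{n} f_k(A) where f_k(z) = b^k λ z + b^k. -/
/-- Example (fractal n-gons): for `b = cos(2π/n) + i·sin(2π/n)` and `|λ| < 1`, the minimal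
invariant set of the R-IFS `{z ↦ b·z, z ↦ λ·z + 1}` on `ℂ` is the unique nonempty compact
set `A` with `A = ⋃_{k=1}^{n} (b^k λ·A + b^k)`, i.e. the fractal n-gon. -/
theorem fractal_ngon (n : ℕ) (hn : 1 ≤ n)
    (b lam : ℂ)
    (hb : b = Complex.cos (2 * Real.pi / n) + Complex.sin (2 * Real.pi / n) * Complex.I)
    (hlam : ‖lam‖ < 1)
    (g f : ℂ → ℂ)
    (hg : ∀ z, g z = b * z)
    (hf : ∀ z, f z = lam * z + 1)
    -- X₀ is the minimal invariant set of the R-IFS {g, f}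
    (X₀ : Set ℂ)
    (h0ne : X₀.Nonempty) (h0c : IsCompact X₀)
    (h0inv : X₀ = (g '' X₀) ∪ (f '' X₀))
    (h0min : ∀ X : Set ℂ, X.Nonempty → IsClosed X → Bornology.IsBounded X →
      X = (g '' X) ∪ (f '' X) → X₀ ⊆ X) :
    X₀ = (⋃ k ∈ Finset.Icc 1 n, (fun z => b ^ k * lam * z + b ^ k) '' X₀) ∧
    ∀ A : Set ℂ, A.Nonempty → IsCompact A →
      A = (⋃ k ∈ Finset.Icc 1 n, (fun z => b ^ k * lam * z + b ^ k) '' A) → A = X₀ := by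
  have hnC : (n : ℂ) ≠ 0 := Nat.cast_ne_zero.mpr (by omega)
  have hbexp : b = Complex.exp ((2 * Real.pi / n : ℂ) * Complex.I) := by
    rw [Complex.exp_mul_I, hb]
  have hbn : b ^ n = 1 := by
    rw [hbexp, ← Complex.exp_nat_mul]
    have : (n : ℂ) * (2 * Real.pi / n * Complex.I) = 2 * Real.pi * Complex.I := by
      field_simp
    rw [this, Complex.exp_two_pi_mul_I]
  have habs : ‖b‖ = 1 := by
    have : (2 * Real.pi / n : ℂ) = ((2 * Real.pi / n : ℝ) : ℂ) := by push_cast; ring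
    rw [hbexp, this, Complex.norm_exp_ofReal_mul_I]
  set F : ℕ → ℂ → ℂ := fun k z => b ^ k * lam * z + b ^ k with hF
  -- distance contraction for each F k
  have hdist : ∀ k a c, dist (F k a) (F k c) = ‖lam‖ * dist a c := by
    intro k a c
    have : F k a - F k c = b ^ k * lam * (a - c) := by simp [hF]; ring
    rw [Complex.dist_eq, Complex.dist_eq, this]
    simp [map_mul, map_pow, habs]
  -- g ∘ F k = F (k+1)
  have hgF : ∀ k z, g (F k z) = F (k + 1) z := by
    intro k z; rw [hg]; simp [hF]; ring
  have hFn1 : F (n + 1) = F 1 := by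
    funext z; simp [hF, pow_succ, hbn]
  -- membership stability
  have hgmem : ∀ w ∈ X₀, b * w ∈ X₀ := by
    intro w hw
    have : g w ∈ (g '' X₀) ∪ (f '' X₀) := Or.inl ⟨w, hw, rfl⟩
    rw [← h0inv] at this; rwa [hg] at this
  have hfmem : ∀ w ∈ X₀, lam * w + 1 ∈ X₀ := by
    intro w hw
    have : f w ∈ (g '' X₀) ∪ (f '' X₀) := Or.inr ⟨w, hw, rfl⟩
    rw [← h0inv] at this; rwa [hf] at this
  have hpow : ∀ k, ∀ w ∈ X₀, b ^ k * w ∈ X₀ := by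
    intro k
    induction k with
    | zero => intro w hw; simpa using hw
    | succ m ih =>
      intro w hw
      have := hgmem _ (ih w hw)
      rwa [← mul_assoc, ← pow_succ'] at this
  have hFmem : ∀ k, ∀ w ∈ X₀, F k w ∈ X₀ := by
    intro k w hw
    have h1 : lam * w + 1 ∈ X₀ := hfmem w hw
    have := hpow k _ h1
    have e : b ^ k * (lam * w + 1) = F k w := by simp [hF]; ring
    rwa [e] at this
  set B : Set ℂ := ⋃ k ∈ Finset.Icc 1 n, F k '' X₀ with hB
  have hBsub : B ⊆ X₀ := by
    intro x hx
    simp only [hB, Set.mem_iUnion, Set.mem_image] at hx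
    obtain ⟨k, _, w, hw, rfl⟩ := hx
    exact hFmem k w hw
  have hBne : B.Nonempty := by
    obtain ⟨w, hw⟩ := h0ne
    exact ⟨F 1 w, by
      simp only [hB, Set.mem_iUnion, Set.mem_image]
      exact ⟨1, by simp [hn], w, hw, rfl⟩⟩
  have hFc : ∀ k : ℕ, Continuous (F k) := by
    intro k
    exact (continuous_const.mul continuous_id).add continuous_const
  have hBcomp : IsCompact B := by
    apply Set.Finite.isCompact_biUnion (Finset.Icc 1 n).finite_toSet
    intro k _; exact h0c.image (hFc k)
  -- g '' B = B
  have hgB : g '' B = B := by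
    ext x
    simp only [hB, Set.mem_iUnion, Set.mem_image, Finset.mem_coe, Finset.mem_Icc]
    constructor
    · rintro ⟨y, ⟨k, hk, w, hw, rfl⟩, rfl⟩
      rw [hgF]
      by_cases hkn : k = n
      · exact ⟨1, by omega, w, hw, by rw [hkn, congrFun hFn1 w]⟩
      · exact ⟨k + 1, by omega, w, hw, rfl⟩
    · rintro ⟨k, hk, w, hw, rfl⟩
      by_cases hk1 : k = 1
      · subst hk1
        exact ⟨F n w, ⟨n, by omega, w, hw, rfl⟩, by rw [hgF, congrFun hFn1 w]⟩
      · refine ⟨F (k - 1) w, ⟨k - 1, by omega, w, hw, rfl⟩, ?_⟩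
        rw [hgF]; congr 1; omega
  have hfB : f '' B ⊆ B := by
    intro x hx
    obtain ⟨y, hy, rfl⟩ := hx
    have hyX : y ∈ X₀ := hBsub hy
    simp only [hB, Set.mem_iUnion, Set.mem_image, Finset.mem_coe, Finset.mem_Icc]
    refine ⟨n, by omega, y, hyX, ?_⟩
    rw [hf]; simp [hF, hbn]
  have hBinv : B = (g '' B) ∪ (f '' B) := by
    rw [hgB, Set.union_eq_self_of_subset_right hfB]
  have key : X₀ = B :=
    le_antisymm (h0min B hBne hBcomp.isClosed hBcomp.isBounded hBinv) hBsub
  refine ⟨key, ?_⟩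
  -- uniqueness
  intro A hAne hAc hAeq
  have hne_top : EMetric.hausdorffEdist A X₀ ≠ ⊤ :=
    Metric.hausdorffEdist_ne_top_of_nonempty_of_bounded hAne h0ne
      hAc.isBounded h0c.isBounded
  set r := Metric.hausdorffDist A X₀ with hr
  have hr0 : 0 ≤ r := Metric.hausdorffDist_nonneg
  have hcontr : r ≤ ‖lam‖ * r := by
    have hbound : Metric.hausdorffDist A X₀ ≤ ‖lam‖ * r := by
      nth_rewrite 1 [hAeq, key]
      apply Metric.hausdorffDist_le_of_mem_dist (by positivity)
      · intro x hx
        simp only [Set.mem_iUnion, Set.mem_image, Finset.mem_coe, Finset.mem_Icc] at hx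
        obtain ⟨k, hk, a, ha, rfl⟩ := hx
        obtain ⟨c, hc, hdc⟩ := h0c.exists_infDist_eq_dist h0ne a
        refine ⟨F k c, ?_, ?_⟩
        · simp only [hB, Set.mem_iUnion, Set.mem_image, Finset.mem_coe, Finset.mem_Icc]
          exact ⟨k, hk, c, hc, rfl⟩
        · rw [hdist, ← hdc]
          exact mul_le_mul_of_nonneg_left
            (Metric.infDist_le_hausdorffDist_of_mem ha hne_top) (by positivity)
      · intro x hx
        simp only [hB, Set.mem_iUnion, Set.mem_image, Finset.mem_coe, Finset.mem_Icc] at hx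
        obtain ⟨k, hk, c, hc, rfl⟩ := hx
        obtain ⟨a, ha, hda⟩ := hAc.exists_infDist_eq_dist hAne c
        refine ⟨F k a, ?_, ?_⟩
        · simp only [Set.mem_iUnion, Set.mem_image, Finset.mem_coe, Finset.mem_Icc]
          exact ⟨k, hk, a, ha, rfl⟩
        · rw [hdist, ← hda]
          have : Metric.infDist c A ≤ r := by
            rw [hr, Metric.hausdorffDist_comm]
            exact Metric.infDist_le_hausdorffDist_of_mem hc
              (by rwa [EMetric.hausdorffEdist_comm])
          exact mul_le_mul_of_nonneg_left this (by positivity)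
    calc r = Metric.hausdorffDist A X₀ := hr
    _ ≤ ‖lam‖ * r := hbound
  have hrz : r = 0 := by nlinarith [norm_nonneg lam]
  exact (IsClosed.hausdorffDist_zero_iff_eq hAc.isClosed h0c.isClosed hne_top).mp hrz
end

section
/- (Proposition, part 2: the Cantor target is a minimal invariant set of an R-IFS) Let α ∈ ℝ be irrational, let g : ℝ² → ℝ² be the rotation about the origin by angle 2πα, and define f₁(x, y) = (√(x² + y²)/3, 0) and f₂(x, y) = (√(x² + y²)/3 + 2/3, 0). Let C be the middle-thirds Cantor set (the unique nonempty compact C ⊆ ℝ with C = (1/3)·C ∪ ((1/3)·C + 2/3)) and X₀ = {p ∈ ℝ² : ‖p‖ ∈ C}. Then X₀ is a nonempty compact set with X₀ = g(X₀) ∪ f₁(X₀) ∪ f₂(X₀), and X₀ ⊆ X for every nonempty closed bounded X ⊆ ℝ² with X = g(X) ∪ f₁(X) ∪ f₂(X). -/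
open Real

/-- The rotation of `ℝ²` about the origin by angle `θ`. -/
noncomputable def planeRotation (θ : ℝ) (p : EuclideanSpace ℝ (Fin 2)) :
    EuclideanSpace ℝ (Fin 2) :=
  WithLp.toLp 2 ![p 0 * Real.cos θ - p 1 * Real.sin θ, p 0 * Real.sin θ + p 1 * Real.cos θ]

/-! ### Auxiliary geometry lemmas -/

noncomputable def cantarPt (r t : ℝ) : EuclideanSpace ℝ (Fin 2) :=
  WithLp.toLp 2 ![r * Real.cos t, r * Real.sin t]

@[simp] lemma cantarPt_zero (r t : ℝ) : cantarPt r t 0 = r * Real.cos t := rfl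
@[simp] lemma cantarPt_one (r t : ℝ) : cantarPt r t 1 = r * Real.sin t := rfl
@[simp] lemma planeRotation_zero' (θ : ℝ) (p : EuclideanSpace ℝ (Fin 2)) :
    planeRotation θ p 0 = p 0 * Real.cos θ - p 1 * Real.sin θ := rfl
@[simp] lemma planeRotation_one' (θ : ℝ) (p : EuclideanSpace ℝ (Fin 2)) :
    planeRotation θ p 1 = p 0 * Real.sin θ + p 1 * Real.cos θ := rfl

lemma eucl_ext {p q : EuclideanSpace ℝ (Fin 2)} (h0 : p 0 = q 0) (h1 : p 1 = q 1) : p = q := by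
  apply PiLp.ext; intro i
  fin_cases i
  · exact h0
  · exact h1

lemma rot_cantarPt (θ r t : ℝ) : planeRotation θ (cantarPt r t) = cantarPt r (t + θ) := by
  apply eucl_ext <;> simp [Real.cos_add, Real.sin_add] <;> ring

lemma cantarPt_periodic (r t : ℝ) (k : ℤ) : cantarPt r (t + k * (2 * Real.pi)) = cantarPt r t := by
  apply eucl_ext <;> simp [Real.cos_add_int_mul_two_pi, Real.sin_add_int_mul_two_pi]

lemma norm_formula (p : EuclideanSpace ℝ (Fin 2)) :
    ‖p‖ = Real.sqrt ((p 0) ^ 2 + (p 1) ^ 2) := by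
  simp [EuclideanSpace.norm_eq, Fin.sum_univ_two, sq_abs]

lemma norm_cantarPt (r t : ℝ) : ‖cantarPt r t‖ = |r| := by
  rw [norm_formula]
  have : (cantarPt r t 0) ^ 2 + (cantarPt r t 1) ^ 2 = r ^ 2 := by
    simp only [cantarPt_zero, cantarPt_one]
    nlinarith [Real.sin_sq_add_cos_sq t]
  rw [this, Real.sqrt_sq_eq_abs]

lemma cont_cantarPt (r : ℝ) : Continuous fun t => cantarPt r t := by
  have : Continuous fun t : ℝ =>
      (WithLp.equiv 2 (Fin 2 → ℝ)).symm ![r * Real.cos t, r * Real.sin t] := by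
    apply Continuous.comp
    · exact PiLp.continuous_toLp 2 (fun _ : Fin 2 => ℝ)
    · apply continuous_pi
      intro i
      fin_cases i <;> simp <;> fun_prop
  exact this

lemma polar (p : EuclideanSpace ℝ (Fin 2)) : ∃ t, p = cantarPt ‖p‖ t := by
  by_cases h : p 0 = 0 ∧ p 1 = 0
  · refine ⟨0, eucl_ext ?_ ?_⟩ <;> simp [h.1, h.2, norm_formula, h]
  · set z : ℂ := ⟨p 0, p 1⟩ with hz
    have hz0 : z ≠ 0 := by
      intro h0
      rw [Complex.ext_iff] at h0
      exact h ⟨h0.1, h0.2⟩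
    have habs : ‖z‖ = ‖p‖ := by
      rw [norm_formula, Complex.norm_def, Complex.normSq_mk]
      ring_nf
    refine ⟨z.arg, eucl_ext ?_ ?_⟩
    · rw [cantarPt_zero, Complex.cos_arg hz0, habs]
      have : ‖p‖ ≠ 0 := by
        intro h0; rw [norm_eq_zero] at h0; apply h; constructor <;> simp [h0]
      field_simp
      rfl
    · rw [cantarPt_one, Complex.sin_arg, habs]
      have : ‖p‖ ≠ 0 := by
        intro h0; rw [norm_eq_zero] at h0; apply h; constructor <;> simp [h0]
      field_simp
      rfl

lemma norm_planeRotation (θ : ℝ) (p : EuclideanSpace ℝ (Fin 2)) :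
    ‖planeRotation θ p‖ = ‖p‖ := by
  rw [norm_formula (planeRotation θ p), norm_formula p]
  have : (planeRotation θ p 0) ^ 2 + (planeRotation θ p 1) ^ 2 = (p 0) ^ 2 + (p 1) ^ 2 := by
    simp only [planeRotation_zero', planeRotation_one']
    linear_combination ((p 0) ^ 2 + (p 1) ^ 2) * Real.sin_sq_add_cos_sq θ
  rw [this]

lemma rot_rot_neg (θ : ℝ) (p : EuclideanSpace ℝ (Fin 2)) :
    planeRotation θ (planeRotation (-θ) p) = p := by
  apply eucl_ext <;>
    simp only [planeRotation_zero', planeRotation_one', Real.cos_neg, Real.sin_neg]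
  · linear_combination (p 0) * Real.sin_sq_add_cos_sq θ
  · linear_combination (p 1) * Real.sin_sq_add_cos_sq θ

lemma norm_axis (x : ℝ) (p : EuclideanSpace ℝ (Fin 2)) (hp : p = ![x, 0]) : ‖p‖ = |x| := by
  rw [norm_formula]
  have h0 : p 0 = x := by rw [hp]; rfl
  have h1 : p 1 = 0 := by rw [hp]; rfl
  rw [h0, h1]
  simp [Real.sqrt_sq_eq_abs]

/-! ### Density of the forward orbit of an irrational rotation -/

/-- The subgroup `{j·θ + k·2π : j k ∈ ℤ}` of `ℝ`. -/
def spanTwoGrp (θ : ℝ) : AddSubgroup ℝ where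
  carrier := {x | ∃ j k : ℤ, x = j * θ + k * (2 * π)}
  zero_mem' := ⟨0, 0, by simp⟩
  add_mem' := by
    rintro a b ⟨j, k, rfl⟩ ⟨j', k', rfl⟩
    exact ⟨j + j', k + k', by push_cast; ring⟩
  neg_mem' := by
    rintro a ⟨j, k, rfl⟩
    exact ⟨-j, -k, by push_cast; ring⟩

lemma spanTwoGrp_dense (α : ℝ) (hα : Irrational α) :
    Dense (spanTwoGrp (2 * π * α) : Set ℝ) := by
  rcases AddSubgroup.dense_or_cyclic (spanTwoGrp (2 * π * α)) with h | ⟨a, ha⟩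
  · exact h
  · exfalso
    have h1 : (2 * π * α) ∈ spanTwoGrp (2 * π * α) := ⟨1, 0, by push_cast; ring⟩
    have h2 : (2 * π) ∈ spanTwoGrp (2 * π * α) := ⟨0, 1, by push_cast; ring⟩
    rw [ha, AddSubgroup.mem_closure_singleton] at h1 h2
    obtain ⟨m, hm⟩ := h1
    obtain ⟨n, hn⟩ := h2
    have hπ : (2:ℝ) * π ≠ 0 := by positivity
    rw [zsmul_eq_mul] at hm hn
    have hn0 : (n : ℝ) ≠ 0 := by
      intro h0
      exact hπ (by rw [← hn, h0, zero_mul])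
    have h3 : (2 * π) * (α * n) = (2 * π) * (m : ℝ) := by
      linear_combination (m : ℝ) * hn - (n : ℝ) * hm
    have h4 : α * n = (m : ℝ) := mul_left_cancel₀ hπ h3
    have : α = (m : ℝ) / (n : ℝ) := by field_simp; linarith [h4]
    exact hα ⟨(m : ℚ) / (n : ℚ), by push_cast [this]; ring⟩

lemma exists_small_step (α : ℝ) (hα : Irrational α) (ε : ℝ) (hε : 0 < ε) :
    ∃ (n₀ : ℕ) (k₀ : ℤ) (d : ℝ), d = n₀ * (2 * π * α) + k₀ * (2 * π) ∧ d ≠ 0 ∧ |d| < ε := by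
  have hπ : (0:ℝ) < 2 * π := by positivity
  set ε' := min ε 1 with hε'
  have hε'0 : 0 < ε' := lt_min hε one_pos
  have hd := spanTwoGrp_dense α hα
  have hmem : (ε' / 2 : ℝ) ∈ closure (spanTwoGrp (2 * π * α) : Set ℝ) := hd _
  rw [Metric.mem_closure_iff] at hmem
  obtain ⟨y, hy, hdist⟩ := hmem (ε' / 2) (by positivity)
  rw [Real.dist_eq] at hdist
  have hy0 : 0 < y := by cases abs_lt.1 hdist; linarith
  have hyε : y < ε' := by cases abs_lt.1 hdist; linarith
  obtain ⟨j, k, rfl⟩ := hy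
  have hj : j ≠ 0 := by
    rintro rfl
    simp only [Int.cast_zero, zero_mul, zero_add] at hy0 hyε
    have h1 : ε' ≤ 1 := min_le_right _ _
    have hπ3 : (3:ℝ) < π := by
      have := Real.pi_gt_three; linarith
    have : |(k:ℝ)| * (2 * π) < 1 := by
      rw [← abs_of_pos hπ, ← abs_mul]
      rw [abs_of_pos hy0]; linarith
    have hk0 : k = 0 := by
      by_contra hk
      have : (1:ℝ) ≤ |(k:ℝ)| := by
        rw [← Int.cast_abs]; exact_mod_cast Int.one_le_abs (by simpa using hk)
      nlinarith
    rw [hk0] at hy0; simp at hy0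
  rcases lt_or_gt_of_ne hj with hjneg | hjpos
  · refine ⟨(-j).toNat, -k, -((j:ℝ) * (2 * π * α) + (k:ℝ) * (2 * π)), ?_, ?_, ?_⟩
    · have h := Int.toNat_of_nonneg (by omega : (0:ℤ) ≤ -j)
      have h' : ((-j).toNat : ℝ) = -(j:ℝ) := by exact_mod_cast congrArg (fun z : ℤ => (z:ℝ)) h
      rw [h']; push_cast; ring
    · intro h; rw [neg_eq_zero] at h; linarith [hy0, h ▸ hy0]
    · rw [abs_neg, abs_of_pos hy0]; exact lt_of_lt_of_le hyε (min_le_left _ _)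
  · refine ⟨j.toNat, k, (j:ℝ) * (2 * π * α) + (k:ℝ) * (2 * π), ?_, ?_, ?_⟩
    · have h := Int.toNat_of_nonneg (by omega : (0:ℤ) ≤ j)
      have h' : (j.toNat : ℝ) = (j:ℝ) := by exact_mod_cast congrArg (fun z : ℤ => (z:ℝ)) h
      rw [h']
    · intro h; linarith [hy0, h ▸ hy0]
    · rw [abs_of_pos hy0]; exact lt_of_lt_of_le hyε (min_le_left _ _)

lemma approx_orbit (α : ℝ) (hα : Irrational α) (a b ε : ℝ) (hε : 0 < ε) :
    ∃ (n : ℕ) (k : ℤ), |a + n * (2 * π * α) + k * (2 * π) - b| < ε := by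
  have hπ : (0:ℝ) < 2 * π := by positivity
  obtain ⟨n₀, k₀, d, hdform, hd0, hdε⟩ := exists_small_step α hα ε hε
  set u := b - a with hu
  rcases lt_or_gt_of_ne hd0 with hdneg | hdpos
  · set K := ⌈u / (2 * π)⌉ with hK
    set v := u - 2 * π * K with hv
    have hv1 : v ≤ 0 := by
      have := Int.le_ceil (u / (2 * π))
      rw [hv]; rw [div_le_iff₀ hπ] at this; nlinarith
    have hvd : 0 ≤ v / d := by
      have h := div_nonneg (neg_nonneg.2 hv1) (neg_nonneg.2 hdneg.le)
      rwa [neg_div_neg_eq] at h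
    set m := ⌈v / d⌉₊ with hm
    have hm1 : v / d ≤ (m:ℝ) := Nat.le_ceil _
    have hm2 : (m:ℝ) < v / d + 1 := Nat.ceil_lt_add_one hvd
    have hmd1 : (m:ℝ) * d ≤ v := by
      rw [div_le_iff_of_neg hdneg] at hm1; linarith
    have hmd2 : v + d < (m:ℝ) * d := by
      have := mul_lt_mul_of_neg_right hm2 hdneg
      rw [add_mul, div_mul_cancel₀ _ (ne_of_lt hdneg)] at this
      linarith
    refine ⟨m * n₀, m * k₀ + K, ?_⟩
    have hcalc : a + (↑(m * n₀) : ℝ) * (2 * π * α) + (↑(m * k₀ + K) : ℝ) * (2 * π) - b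
        = (m:ℝ) * d - v := by
      rw [hdform, hv]; push_cast; ring
    rw [hcalc, abs_lt]
    constructor <;> nlinarith [abs_lt.mp hdε]
  · set K := ⌊u / (2 * π)⌋ with hK
    set v := u - 2 * π * K with hv
    have hv1 : 0 ≤ v := by
      have := Int.floor_le (u / (2 * π))
      rw [hv]; rw [le_div_iff₀ hπ] at this; nlinarith
    have hvd : 0 ≤ v / d := div_nonneg hv1 hdpos.le
    set m := ⌈v / d⌉₊ with hm
    have hm1 : v / d ≤ (m:ℝ) := Nat.le_ceil _
    have hm2 : (m:ℝ) < v / d + 1 := Nat.ceil_lt_add_one hvd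
    have hmd1 : v ≤ (m:ℝ) * d := by
      rw [div_le_iff₀ hdpos] at hm1; linarith
    have hmd2 : (m:ℝ) * d < v + d := by
      have := mul_lt_mul_of_pos_right hm2 hdpos
      rw [add_mul, div_mul_cancel₀ _ (ne_of_gt hdpos)] at this
      linarith
    refine ⟨m * n₀, m * k₀ + K, ?_⟩
    have hcalc : a + (↑(m * n₀) : ℝ) * (2 * π * α) + (↑(m * k₀ + K) : ℝ) * (2 * π) - b
        = (m:ℝ) * d - v := by
      rw [hdform, hv]; push_cast; ring
    rw [hcalc, abs_lt]
    constructor <;> nlinarith [abs_lt.mp hdε]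

/-! ### Facts about the Cantor set -/

lemma cantor_nonneg (C : Set ℝ) (hCne : C.Nonempty) (hCc : IsCompact C)
    (hC : C = (fun x : ℝ => x / 3) '' C ∪ (fun x : ℝ => x / 3 + 2 / 3) '' C) :
    sInf C ∈ C ∧ ∀ c ∈ C, 0 ≤ c := by
  have hbdd : BddBelow C := hCc.bddBelow
  have hmem : sInf C ∈ C := hCc.sInf_mem hCne
  have h0 : 0 ≤ sInf C := by
    set m := sInf C with hm
    have hmm : m ∈ C := hmem
    rw [hC] at hmm
    rcases hmm with ⟨c, hc, hceq⟩ | ⟨c, hc, hceq⟩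
    · have : m ≤ c := csInf_le hbdd hc
      simp only at hceq
      linarith
    · have : m ≤ c := csInf_le hbdd hc
      simp only at hceq
      linarith
  exact ⟨hmem, fun c hc => le_trans h0 (csInf_le hbdd hc)⟩

lemma cantor_minimal (C : Set ℝ) (hCne : C.Nonempty) (hCc : IsCompact C)
    (hC : C = (fun x : ℝ => x / 3) '' C ∪ (fun x : ℝ => x / 3 + 2 / 3) '' C)
    (N : Set ℝ) (hNne : N.Nonempty) (hNcl : IsClosed N)
    (h1 : ∀ r ∈ N, r / 3 ∈ N) (h2 : ∀ r ∈ N, r / 3 + 2 / 3 ∈ N) : C ⊆ N := by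
  obtain ⟨y₀, hy₀⟩ := hNne
  obtain ⟨M₀, hM₀⟩ : ∃ M₀, ∀ c ∈ C, |c| ≤ M₀ := by
    obtain ⟨R, hR⟩ := hCc.isBounded.subset_closedBall 0
    exact ⟨R, fun c hc => by simpa [Real.dist_eq] using hR hc⟩
  set M := M₀ + |y₀| + 1 with hM
  have hMpos : 0 < M := by
    obtain ⟨c, hc⟩ := hCne
    have := hM₀ c hc
    have := abs_nonneg c
    have := abs_nonneg y₀
    linarith
  have key : ∀ n : ℕ, ∀ c ∈ C, ∃ y ∈ N, |c - y| ≤ M / 3 ^ n := by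
    intro n
    induction n with
    | zero =>
      intro c hc
      refine ⟨y₀, hy₀, ?_⟩
      have := hM₀ c hc
      simp only [pow_zero, div_one]
      calc |c - y₀| ≤ |c| + |y₀| := abs_sub c y₀
        _ ≤ M := by linarith
    | succ n ih =>
      intro c hc
      rw [hC] at hc
      rcases hc with ⟨c', hc', hceq⟩ | ⟨c', hc', hceq⟩
      · obtain ⟨y, hyN, hy⟩ := ih c' hc'
        refine ⟨y / 3, h1 y hyN, ?_⟩
        simp only at hceq
        rw [← hceq]
        have he : c' / 3 - y / 3 = (c' - y) / 3 := by ring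
        rw [he, abs_div, pow_succ, abs_of_pos (by norm_num : (0:ℝ) < 3)]
        calc |c' - y| / 3 ≤ (M / 3 ^ n) / 3 := by linarith
          _ = M / (3 ^ n * 3) := by ring
      · obtain ⟨y, hyN, hy⟩ := ih c' hc'
        refine ⟨y / 3 + 2 / 3, h2 y hyN, ?_⟩
        simp only at hceq
        rw [← hceq]
        have he : c' / 3 + 2 / 3 - (y / 3 + 2 / 3) = (c' - y) / 3 := by ring
        rw [he, abs_div, abs_of_pos (by norm_num : (0:ℝ) < 3), pow_succ]
        calc |c' - y| / 3 ≤ (M / 3 ^ n) / 3 := by linarith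
          _ = M / (3 ^ n * 3) := by ring
  intro c hc
  rw [← hNcl.closure_eq, Metric.mem_closure_iff]
  intro ε hε
  obtain ⟨n, hn⟩ : ∃ n : ℕ, M / 3 ^ n < ε := by
    obtain ⟨n, hn⟩ := exists_pow_lt_of_lt_one (div_pos hε hMpos) (by norm_num : (1:ℝ)/3 < 1)
    refine ⟨n, ?_⟩
    rw [lt_div_iff₀ hMpos] at hn
    have heq : M / 3 ^ n = (1/3 : ℝ) ^ n * M := by
      rw [one_div, inv_pow]; ring
    linarith [heq ▸ hn]
  obtain ⟨y, hyN, hy⟩ := key n c hc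
  exact ⟨y, hyN, lt_of_le_of_lt (by rwa [Real.dist_eq]) hn⟩

/-- Proposition (part 2): the Cantor target `X₀ = {p ∈ ℝ² : ‖p‖ ∈ C}` is the minimal
invariant set of the R-IFS `{g, f₁, f₂}`, where `g` is the rotation by `2πα` (`α` irrational),
`f₁(x,y) = (√(x²+y²)/3, 0)` and `f₂(x,y) = (√(x²+y²)/3 + 2/3, 0)`. -/
theorem cantor_target_is_minimal_invariant_of_RIFS
    (α : ℝ) (hα : Irrational α)
    (g f₁ f₂ : EuclideanSpace ℝ (Fin 2) → EuclideanSpace ℝ (Fin 2))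
    (hg : g = planeRotation (2 * Real.pi * α))
    (hf₁ : ∀ p, f₁ p = ![Real.sqrt ((p 0) ^ 2 + (p 1) ^ 2) / 3, 0])
    (hf₂ : ∀ p, f₂ p = ![Real.sqrt ((p 0) ^ 2 + (p 1) ^ 2) / 3 + 2 / 3, 0])
    (C : Set ℝ) (hCne : C.Nonempty) (hCc : IsCompact C)
    (hC : C = (fun x : ℝ => x / 3) '' C ∪ (fun x : ℝ => x / 3 + 2 / 3) '' C)
    (X₀ : Set (EuclideanSpace ℝ (Fin 2)))
    (hX₀ : X₀ = {p : EuclideanSpace ℝ (Fin 2) | ‖p‖ ∈ C}) :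
    X₀.Nonempty ∧ IsCompact X₀ ∧
    X₀ = (g '' X₀) ∪ (f₁ '' X₀) ∪ (f₂ '' X₀) ∧
    ∀ X : Set (EuclideanSpace ℝ (Fin 2)), X.Nonempty → IsClosed X →
      Bornology.IsBounded X → X = (g '' X) ∪ (f₁ '' X) ∪ (f₂ '' X) → X₀ ⊆ X := by
  obtain ⟨hsInf_mem, hCpos⟩ := cantor_nonneg C hCne hCc hC
  -- norms of images under f₁, f₂
  have hnf₁ : ∀ p, ‖f₁ p‖ = ‖p‖ / 3 := by
    intro p
    have h : f₁ p = ![‖p‖ / 3, 0] := by rw [hf₁ p, ← norm_formula p]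
    rw [norm_axis _ _ h, abs_of_nonneg (by positivity)]
  have hnf₂ : ∀ p, ‖f₂ p‖ = ‖p‖ / 3 + 2 / 3 := by
    intro p
    have h : f₂ p = ![‖p‖ / 3 + 2 / 3, 0] := by rw [hf₂ p, ← norm_formula p]
    rw [norm_axis _ _ h, abs_of_nonneg (by positivity)]
  have hng : ∀ p, ‖g p‖ = ‖p‖ := by
    intro p; rw [hg]; exact norm_planeRotation _ p
  refine ⟨?_, ?_, ?_, ?_⟩
  · -- Nonempty
    refine ⟨cantarPt (sInf C) 0, ?_⟩
    rw [hX₀]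
    show ‖cantarPt (sInf C) 0‖ ∈ C
    rw [norm_cantarPt, abs_of_nonneg (hCpos _ hsInf_mem)]
    exact hsInf_mem
  · -- Compact
    have hclosed : IsClosed X₀ := by
      rw [hX₀]
      exact hCc.isClosed.preimage continuous_norm
    have hbounded : Bornology.IsBounded X₀ := by
      obtain ⟨R, hR⟩ := hCc.isBounded.subset_closedBall 0
      have hsub : X₀ ⊆ Metric.closedBall (0 : EuclideanSpace ℝ (Fin 2)) R := by
        intro p hp
        rw [hX₀] at hp
        have := hR hp
        rw [Metric.mem_closedBall, Real.dist_eq, sub_zero] at this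
        rw [Metric.mem_closedBall, dist_zero_right]
        calc ‖p‖ ≤ |‖p‖| := le_abs_self _
          _ ≤ R := this
      exact Metric.isBounded_closedBall.subset hsub
    exact Metric.isCompact_of_isClosed_isBounded hclosed hbounded
  · -- Invariance
    apply Set.Subset.antisymm
    · -- X₀ ⊆ g '' X₀ (⊆ union)
      intro p hp
      apply Set.mem_union_left
      apply Set.mem_union_left
      refine ⟨planeRotation (-(2 * Real.pi * α)) p, ?_, ?_⟩
      · rw [hX₀] at hp ⊢
        show ‖planeRotation (-(2 * Real.pi * α)) p‖ ∈ C
        rw [norm_planeRotation]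
        exact hp
      · rw [hg]; exact rot_rot_neg _ p
    · intro q hq
      rcases hq with hq | hq
      rcases hq with hq | hq
      · obtain ⟨p, hp, rfl⟩ := hq
        rw [hX₀] at hp ⊢
        show ‖g p‖ ∈ C
        rw [hng]
        exact hp
      · obtain ⟨p, hp, rfl⟩ := hq
        rw [hX₀] at hp ⊢
        show ‖f₁ p‖ ∈ C
        rw [hnf₁]
        rw [hC]
        exact Or.inl ⟨‖p‖, hp, rfl⟩
      · obtain ⟨p, hp, rfl⟩ := hq
        rw [hX₀] at hp ⊢
        show ‖f₂ p‖ ∈ C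
        rw [hnf₂]
        rw [hC]
        exact Or.inr ⟨‖p‖, hp, rfl⟩
  · -- Minimality
    intro X hXne hXcl hXbd hXinv
    have hgX : ∀ q ∈ X, g q ∈ X := by
      intro q hq
      rw [hXinv]
      exact Set.mem_union_left _ (Set.mem_union_left _ ⟨q, hq, rfl⟩)
    have hf₁X : ∀ q ∈ X, f₁ q ∈ X := by
      intro q hq
      rw [hXinv]
      exact Set.mem_union_left _ (Set.mem_union_right _ ⟨q, hq, rfl⟩)
    have hf₂X : ∀ q ∈ X, f₂ q ∈ X := by
      intro q hq
      rw [hXinv]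
      exact Set.mem_union_right _ ⟨q, hq, rfl⟩
    have hXcompact : IsCompact X := Metric.isCompact_of_isClosed_isBounded hXcl hXbd
    -- the set of norms of X
    set N : Set ℝ := Norm.norm '' X with hN
    have hNne : N.Nonempty := hXne.image _
    have hNcl : IsClosed N := (hXcompact.image continuous_norm).isClosed
    have hN1 : ∀ r ∈ N, r / 3 ∈ N := by
      rintro r ⟨q, hq, rfl⟩
      exact ⟨f₁ q, hf₁X q hq, hnf₁ q⟩
    have hN2 : ∀ r ∈ N, r / 3 + 2 / 3 ∈ N := by
      rintro r ⟨q, hq, rfl⟩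
      exact ⟨f₂ q, hf₂X q hq, hnf₂ q⟩
    have hCN : C ⊆ N := cantor_minimal C hCne hCc hC N hNne hNcl hN1 hN2
    rw [hX₀]
    intro p hp
    have hpC : ‖p‖ ∈ C := hp
    obtain ⟨q, hqX, hqnorm⟩ := hCN hpC
    -- polar coordinates
    obtain ⟨tp, htp⟩ := polar p
    obtain ⟨tq, htq⟩ := polar q
    rw [hqnorm] at htq
    set r := ‖p‖ with hr
    -- forward orbit of q stays in X
    have horbit : ∀ n : ℕ, cantarPt r (tq + n * (2 * Real.pi * α)) ∈ X := by
      intro n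
      induction n with
      | zero =>
        have : tq + (0:ℕ) * (2 * Real.pi * α) = tq := by push_cast; ring
        rw [this, ← htq]
        exact hqX
      | succ n ih =>
        have harg : tq + ((n:ℕ)+1 : ℕ) * (2 * Real.pi * α)
            = (tq + n * (2 * Real.pi * α)) + (2 * Real.pi * α) := by push_cast; ring
        rw [harg, ← rot_cantarPt, ← hg]
        exact hgX _ ih
    have horbitk : ∀ (n : ℕ) (k : ℤ),
        cantarPt r (tq + n * (2 * Real.pi * α) + k * (2 * Real.pi)) ∈ X := by
      intro n k
      rw [cantarPt_periodic]
      exact horbit n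
    -- the preimage of X under cantarPt r is closed and contains the orbit, hence tp
    have htpX : cantarPt r tp ∈ X := by
      have hT : IsClosed ((fun t => cantarPt r t) ⁻¹' X) := hXcl.preimage (cont_cantarPt r)
      have : tp ∈ (fun t => cantarPt r t) ⁻¹' X := by
        rw [← hT.closure_eq, Metric.mem_closure_iff]
        intro ε hε
        obtain ⟨n, k, hnk⟩ := approx_orbit α hα tq tp ε hε
        refine ⟨tq + n * (2 * Real.pi * α) + k * (2 * Real.pi), horbitk n k, ?_⟩
        rw [Real.dist_eq, abs_sub_comm]
        exact hnk
      exact this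
    rw [htp]
    exact htpX
end
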